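/- arXiv:2307.16047 — 14 statements merged into one kernel-verified Lean document; each statement's English description precedes it below -/
import Mathlib

section
/- If a topological space X is a Q-space (every subset of X is a Gδ-set), then X is a Δ-space: for every decreasing sequence (Dₙ) of subsets of X with empty intersection there is a decreasing sequence (Vₙ) of open sets with Dₙ ⊆ Vₙ and ⋂ₙ Vₙ = ∅. -/
/-- A topological space is a Δ-space if every decreasing sequence of subsets with
empty intersection has a decreasing open expansion with empty intersection. -/
def IsDeltaSpace (X : Type*) [TopologicalSpace X] : Prop :=
  ∀ D : ℕ → Set X, (∀ n, D (n + 1) ⊆ D n) → (⋂ n, D n) = ∅ →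
    ∃ V : ℕ → Set X, (∀ n, IsOpen (V n)) ∧ (∀ n, V (n + 1) ⊆ V n) ∧
      (∀ n, D n ⊆ V n) ∧ (⋂ n, V n) = ∅

/-- A Q-space (every subset is Gδ) is a Δ-space. -/
theorem q_space_is_delta_space {X : Type*} [TopologicalSpace X]
    (hQ : ∀ A : Set X, IsGδ A) : IsDeltaSpace X := by
  intro D hdec hempty
  -- choose open sets U i m with D i = ⋂ m, U i m
  have hU : ∀ i : ℕ, ∃ U : ℕ → Set X, (∀ m, IsOpen (U m)) ∧ D i = ⋂ m, U m := fun i =>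
    isGδ_iff_eq_iInter_nat.mp (hQ (D i))
  choose U hUopen hUeq using hU
  -- D is antitone
  have hanti : ∀ i n : ℕ, i ≤ n → D n ⊆ D i := by
    intro i n h
    induction n with
    | zero => simp [Nat.le_zero.mp h]
    | succ k ih =>
      rcases Nat.le_succ_iff_eq_or_le.mp h with h' | h'
      · simp [h']
      · exact (hdec k).trans (ih h')
  refine ⟨fun n => ⋂ i ∈ Finset.range (n + 1), ⋂ j ∈ Finset.range (n + 1), U i j,
      ?_, ?_, ?_, ?_⟩
  · intro n
    exact isOpen_biInter_finset fun i _ => isOpen_biInter_finset fun j _ => hUopen i j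
  · intro n
    intro x hx
    simp only [Set.mem_iInter, Finset.mem_range] at hx ⊢
    intro i hi j hj
    exact hx i (by omega) j (by omega)
  · intro n x hx
    simp only [Set.mem_iInter]
    intro i hi j hj
    have hxi : x ∈ D i := hanti i n (by simpa using Nat.lt_succ_iff.mp (Finset.mem_range.mp hi)) hx
    rw [hUeq i] at hxi
    exact Set.mem_iInter.mp hxi j
  · ext x
    simp only [Set.mem_iInter, Set.mem_empty_iff_false, iff_false]
    intro hx
    have hxD : ∀ i, x ∈ D i := by
      intro i
      rw [hUeq i]
      refine Set.mem_iInter.mpr fun j => ?_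
      have := hx (max i j)
      exact this i (Finset.mem_range.mpr (by omega)) j (Finset.mem_range.mpr (by omega))
    have : x ∈ ⋂ n, D n := Set.mem_iInter.mpr hxD
    rw [hempty] at this
    exact this
end

section
/- If a topological space X is a countable union of closed discrete subspaces (σ-closed discrete), then X is a Q-space, i.e., every subset of X is a Gδ-set. -/
/-- A subset of a closed discrete subspace is closed. -/
lemma closed_of_subset_closed_discrete {X : Type*} [TopologicalSpace X]
    {D S : Set X} (hD : IsClosed D) [DiscreteTopology D] (hS : S ⊆ D) :
    IsClosed S := by
  have h1 : IsClosed ((Subtype.val : D → X) ⁻¹' S) := isClosed_discrete _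
  have h2 : IsClosed ((Subtype.val : D → X) '' ((Subtype.val : D → X) ⁻¹' S)) :=
    hD.isClosedEmbedding_subtypeVal.isClosedMap _ h1
  rwa [Subtype.image_preimage_coe, Set.inter_eq_right.mpr hS] at h2

/-- If `X` is a countable union of closed discrete subspaces, then every subset
of `X` is a Gδ-set (i.e. `X` is a Q-space). -/
theorem sigma_closed_discrete_is_q_space {X : Type*} [TopologicalSpace X]
    (D : ℕ → Set X) (hcover : (⋃ n, D n) = Set.univ)
    (hclosed : ∀ n, IsClosed (D n))
    (hdiscrete : ∀ n, DiscreteTopology (D n)) :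
    ∀ A : Set X, IsGδ A := by
  intro A
  have hA : A = ⋂ n, (Aᶜ ∩ D n)ᶜ := by
    ext x
    simp only [Set.mem_iInter, Set.mem_compl_iff, Set.mem_inter_iff, not_and]
    constructor
    · intro hx n hxc
      exact absurd hx hxc
    · intro h
      by_contra hx
      obtain ⟨n, hn⟩ : ∃ n, x ∈ D n := by
        have := Set.mem_univ x
        rw [← hcover] at this
        exact Set.mem_iUnion.mp this
      exact h n hx hn
  rw [hA]
  refine .iInter fun n => ?_
  have := hdiscrete n
  exact (closed_of_subset_closed_discrete (hclosed n) Set.inter_subset_right).isOpen_compl.isGδ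
end

section
/- Every subspace of a Δ-space is a Δ-space. -/
/-- Every subspace of a Δ-space is a Δ-space. -/
theorem subspace_of_delta_space {X : Type*} [TopologicalSpace X]
    (hX : IsDeltaSpace X) (S : Set X) : IsDeltaSpace S := by
  intro D hdec hempty
  obtain ⟨V, hVopen, hVdec, hVsub, hVempty⟩ :=
    hX (fun n => Subtype.val '' D n)
      (fun n => Set.image_mono (hdec n))
      (by
        ext x
        simp only [Set.mem_iInter, Set.mem_image, Set.mem_empty_iff_false, iff_false]
        intro h
        obtain ⟨d0, hd0, hx0⟩ := h 0
        have : d0 ∈ ⋂ n, D n := by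
          rw [Set.mem_iInter]
          intro n
          obtain ⟨dn, hdn, hxn⟩ := h n
          have : dn = d0 := Subtype.val_injective (hxn.trans hx0.symm)
          rwa [this] at hdn
        rw [hempty] at this
        exact this)
  refine ⟨fun n => Subtype.val ⁻¹' V n, fun n => (hVopen n).preimage continuous_subtype_val,
    fun n => Set.preimage_mono (hVdec n), fun n x hx => hVsub n ⟨x, hx, rfl⟩, ?_⟩
  ext x
  simp only [Set.mem_iInter, Set.mem_preimage, Set.mem_empty_iff_false, iff_false]
  intro h
  have : (x : X) ∈ ⋂ n, V n := Set.mem_iInter.2 h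
  rw [hVempty] at this
  exact this
end

section
/- A topological space X is a Δ-space if and only if every countable disjoint collection {Aₙ : n ∈ ω} of subsets of X admits a point-finite open expansion, i.e., open sets Uₙ ⊇ Aₙ such that every point of X lies in only finitely many Uₙ. -/
/-- `X` is a Δ-space iff every countable disjoint family of subsets of `X` has a
point-finite open expansion. -/
theorem delta_space_iff_point_finite_expansion {X : Type*} [TopologicalSpace X] :
    IsDeltaSpace X ↔
      ∀ A : ℕ → Set X, (Pairwise fun m n => Disjoint (A m) (A n)) →
        ∃ U : ℕ → Set X, (∀ n, IsOpen (U n)) ∧ (∀ n, A n ⊆ U n) ∧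
          ∀ x : X, {n | x ∈ U n}.Finite := by
  constructor
  · intro h A hA
    set D : ℕ → Set X := fun n => ⋃ k, ⋃ _ : n ≤ k, A k with hDdef
    have hdec : ∀ n, D (n + 1) ⊆ D n := by
      intro n x hx
      simp only [hDdef, Set.mem_iUnion] at hx ⊢
      obtain ⟨k, hk, hxk⟩ := hx
      exact ⟨k, le_trans (Nat.le_succ n) hk, hxk⟩
    have hempty : (⋂ n, D n) = ∅ := by
      ext x
      simp only [Set.mem_iInter, Set.mem_empty_iff_false, iff_false]
      intro hx
      have h0 := hx 0
      simp only [hDdef, Set.mem_iUnion] at h0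
      obtain ⟨k₀, _, hx₀⟩ := h0
      have h1 := hx (k₀ + 1)
      simp only [hDdef, Set.mem_iUnion] at h1
      obtain ⟨k₁, hk₁, hx₁⟩ := h1
      exact Set.disjoint_left.mp (hA (Nat.ne_of_lt (Nat.lt_of_succ_le hk₁))) hx₀ hx₁
    obtain ⟨V, hVopen, hVdec, hDV, hVempty⟩ := h D hdec hempty
    have hVanti : Antitone V := antitone_nat_of_succ_le hVdec
    refine ⟨V, hVopen, ?_, ?_⟩
    · intro n x hx
      apply hDV n
      simp only [hDdef, Set.mem_iUnion]
      exact ⟨n, le_refl n, hx⟩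
    · intro x
      have : ∃ N, x ∉ V N := by
        by_contra hc
        push_neg at hc
        have : x ∈ ⋂ n, V n := Set.mem_iInter.mpr hc
        rw [hVempty] at this
        exact this
      obtain ⟨N, hN⟩ := this
      apply Set.Finite.subset (Set.finite_Iio N)
      intro n hn
      simp only [Set.mem_Iio]
      by_contra hc
      push_neg at hc
      exact hN (hVanti hc hn)
  · intro h D hdec hD
    have hDanti : Antitone D := antitone_nat_of_succ_le hdec
    set A : ℕ → Set X := fun n => D n \ D (n + 1) with hAdef
    have key : ∀ m n, m < n → Disjoint (A m) (A n) := by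
      intro m n hmn
      rw [Set.disjoint_left]
      intro x hxm hxn
      exact hxm.2 (hDanti (Nat.succ_le_of_lt hmn) hxn.1)
    have hpw : Pairwise fun m n => Disjoint (A m) (A n) := by
      intro m n hmn
      rcases hmn.lt_or_gt with h' | h'
      · exact key m n h'
      · exact (key n m h').symm
    obtain ⟨U, hUopen, hAU, hUfin⟩ := h A hpw
    refine ⟨fun n => ⋃ k, ⋃ _ : n ≤ k, U k, ?_, ?_, ?_, ?_⟩
    · intro n
      exact isOpen_iUnion fun k => isOpen_iUnion fun _ => hUopen k
    · intro n x hx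
      simp only [Set.mem_iUnion] at hx ⊢
      obtain ⟨k, hk, hxk⟩ := hx
      exact ⟨k, le_trans (Nat.le_succ n) hk, hxk⟩
    · intro n x hx
      have hex : ∃ m, x ∉ D m := by
        by_contra hc
        push_neg at hc
        have : x ∈ ⋂ n, D n := Set.mem_iInter.mpr hc
        rw [hD] at this
        exact this
      classical
      let m := Nat.find hex
      have hm : x ∉ D m := Nat.find_spec hex
      have hnm : n < m := by
        by_contra hc
        push_neg at hc
        exact hm (hDanti hc hx)
      set K := m - 1 with hKdef
      have hKm : K < m := Nat.sub_lt (Nat.lt_of_le_of_lt (Nat.zero_le n) hnm) one_pos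
      have hxK : x ∈ D K := by
        by_contra hc
        exact absurd hc (Nat.find_min hex hKm)
      have hK1 : K + 1 = m := Nat.succ_pred_eq_of_pos (Nat.lt_of_le_of_lt (Nat.zero_le n) hnm)
      have hxA : x ∈ A K := ⟨hxK, by rw [hK1]; exact hm⟩
      have hnK : n ≤ K := by omega
      simp only [Set.mem_iUnion]
      exact ⟨K, hnK, hAU K hxA⟩
    · ext x
      simp only [Set.mem_iInter, Set.mem_empty_iff_false, iff_false]
      intro hx
      obtain ⟨N, hN⟩ := (hUfin x).bddAbove
      have h1 := hx (N + 1)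
      simp only [Set.mem_iUnion] at h1
      obtain ⟨k, hk, hxk⟩ := h1
      have : k ≤ N := hN hxk
      omega
end

section
/- If o(X)^{ℵ₀} ≤ |X|, where o(X) is the cardinality of the collection of open subsets of X, then X is not a Δ-space. -/
open Cardinal

/-- If `o(X)^ℵ₀ ≤ |X|`, where `o(X)` is the number of open subsets of `X`,
then `X` is not a Δ-space. -/
theorem not_delta_of_opens_pow_aleph0_le {X : Type*} [TopologicalSpace X]
    (h : #{U : Set X // IsOpen U} ^ aleph0 ≤ #X) :
    ¬ IsDeltaSpace X := by
  intro hΔ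
  obtain ⟨f⟩ : Nonempty ((ℕ → {U : Set X // IsOpen U}) ↪ X) := by
    rw [← Cardinal.le_def]
    calc #(ℕ → {U : Set X // IsOpen U}) = #{U : Set X // IsOpen U} ^ aleph0 := by
          simp [Cardinal.mk_arrow]
      _ ≤ #X := h
  set D : ℕ → Set X := fun n =>
    {x | ∃ S : ℕ → {U : Set X // IsOpen U}, (∀ m, ((S (m+1) : Set X)) ⊆ S m) ∧
      f S = x ∧ x ∈ (S n : Set X) ∧ ¬ x ∈ ⋂ k, (S k : Set X)} with hD
  have hdec : ∀ n, D (n+1) ⊆ D n := by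
    rintro n x ⟨S, hS, hfx, hx, hnot⟩
    exact ⟨S, hS, hfx, hS n hx, hnot⟩
  have hempty : (⋂ n, D n) = ∅ := by
    ext x; simp only [Set.mem_iInter, Set.mem_empty_iff_false, iff_false]
    intro hx
    obtain ⟨S, hS, hfx, hx0, hnot⟩ := hx 0
    apply hnot
    rw [Set.mem_iInter]
    intro k
    obtain ⟨S', hS', hfx', hxk, _⟩ := hx k
    have hSS : S' = S := f.injective (hfx'.trans hfx.symm)
    rwa [hSS] at hxk
  obtain ⟨V, hVopen, hVdec, hDV, hVempty⟩ := hΔ D hdec hempty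
  -- the padded diagonal sequence (univ, V 0, V 1, ...)
  set S : ℕ → {U : Set X // IsOpen U} := fun n =>
    Nat.rec ⟨Set.univ, isOpen_univ⟩ (fun m _ => ⟨V m, hVopen m⟩) n with hSdef
  have hS0 : (S 0 : Set X) = Set.univ := rfl
  have hSsucc : ∀ n, (S (n+1) : Set X) = V n := fun n => rfl
  have hSdec : ∀ m, ((S (m+1) : Set X)) ⊆ S m := by
    intro m
    cases m with
    | zero => rw [hS0]; exact Set.subset_univ _
    | succ k => rw [hSsucc, hSsucc]; exact hVdec k
  have hSint : (⋂ k, (S k : Set X)) = ∅ := by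
    apply Set.eq_empty_iff_forall_notMem.mpr
    intro x hx
    have hxV : x ∈ ⋂ n, V n := by
      rw [Set.mem_iInter]; intro n
      have := Set.mem_iInter.mp hx (n+1)
      rwa [hSsucc] at this
    rw [hVempty] at hxV; exact hxV
  have key : ∀ n, f S ∈ (S n : Set X) := by
    intro n
    induction n with
    | zero => rw [hS0]; trivial
    | succ k ih =>
      have hxD : f S ∈ D k :=
        ⟨S, hSdec, rfl, ih, by rw [hSint]; exact Set.notMem_empty _⟩
      have := hDV k hxD
      rw [hSsucc]; exact this
  have hmem : f S ∈ ⋂ k, (S k : Set X) := Set.mem_iInter.mpr key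
  rw [hSint] at hmem; exact hmem
end

section
/- If X is a Baire space that can be partitioned into countably many dense subsets (ω-resolvable), then X is not a Δ-space. -/
/-- A nonempty Baire space which is partitioned into countably many pairwise
disjoint dense subsets is not a Δ-space. -/
theorem baire_omega_resolvable_not_delta {X : Type*} [TopologicalSpace X]
    [Nonempty X] [BaireSpace X]
    (D : ℕ → Set X) (hdense : ∀ n, Dense (D n))
    (hdisj : Pairwise fun m n => Disjoint (D m) (D n))
    (hcover : (⋃ n, D n) = Set.univ) :
    ¬ IsDeltaSpace X := by
  intro hΔ
  set E : ℕ → Set X := fun n => ⋃ m, ⋃ (_ : n ≤ m), D m with hE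
  have hEdec : ∀ n, E (n + 1) ⊆ E n := by
    intro n x hx
    simp only [hE, Set.mem_iUnion] at hx ⊢
    obtain ⟨m, hm, hxm⟩ := hx
    exact ⟨m, le_trans (Nat.le_succ n) hm, hxm⟩
  have hEempty : (⋂ n, E n) = ∅ := by
    ext x
    simp only [Set.mem_iInter, Set.mem_empty_iff_false, iff_false]
    intro hx
    have hxU : x ∈ ⋃ n, D n := hcover ▸ Set.mem_univ x
    obtain ⟨k, hk⟩ := Set.mem_iUnion.mp hxU
    have := hx (k + 1)
    simp only [hE, Set.mem_iUnion] at this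
    obtain ⟨m, hm, hxm⟩ := this
    have hne : k ≠ m := by omega
    exact (hdisj hne).ne_of_mem hk hxm rfl
  obtain ⟨V, hVopen, _, hVsub, hVempty⟩ := hΔ E hEdec hEempty
  have hVdense : ∀ n, Dense (V n) := by
    intro n
    refine (hdense n).mono ?_
    refine le_trans ?_ (hVsub n)
    intro x hx
    exact Set.mem_iUnion.mpr ⟨n, Set.mem_iUnion.mpr ⟨le_refl n, hx⟩⟩
  have : Dense (⋂ n, V n) := dense_iInter_of_isOpen hVopen hVdense
  obtain ⟨x, hx⟩ := this.nonempty
  rw [hVempty] at hx; exact hx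
end

section
/- Let S be a stationary subset of ω₁ with the subspace order topology. Then S, viewed as a topological space, is not a Δ-space. More precisely, if S is partitioned into countably many stationary subsets Sₙ of its set of limit points, then the family {Sₙ} admits no point-finite open expansion in S. -/
noncomputable def omega1 : Ordinal := (Cardinal.aleph 1).ord

/-- `C` is a club (closed unbounded set) in `ω₁`. -/
def IsClubInOmega1 (C : Set Ordinal) : Prop :=
  C ⊆ Set.Iio omega1 ∧
  (∀ o < omega1, ∃ c ∈ C, o ≤ c) ∧
  (∀ o, o < omega1 → Order.IsSuccLimit o → (∀ p < o, ∃ c ∈ C, p < c ∧ c < o) → o ∈ C)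

/-- `S ⊆ ω₁` is stationary: it meets every club in `ω₁`. -/
def IsStationaryInOmega1 (S : Set Ordinal) : Prop :=
  S ⊆ Set.Iio omega1 ∧ ∀ C, IsClubInOmega1 C → (S ∩ C).Nonempty

lemma omega1_isLimit : Order.IsSuccLimit omega1 :=
  Cardinal.isSuccLimit_ord (Cardinal.aleph0_le_aleph 1)

lemma iSup_lt_omega1 (f : ℕ → Ordinal) (h : ∀ n, f n < omega1) :
    (⨆ n, f n) < omega1 := by
  apply Ordinal.iSup_lt_ord_lift _ h
  rw [omega1, Cardinal.isRegular_aleph_one.cof_eq, Cardinal.mk_nat, Cardinal.lift_aleph0]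
  exact Cardinal.aleph0_lt_aleph_one

/-- Countable intersections of clubs are clubs. -/
lemma club_iInter (C : ℕ → Set Ordinal) (h : ∀ n, IsClubInOmega1 (C n)) :
    IsClubInOmega1 (⋂ n, C n) := by
  refine ⟨fun x hx => (h 0).1 (Set.mem_iInter.1 hx 0), ?_, ?_⟩
  · intro o ho
    choose g hg1 hg2 using fun n o (ho : o < omega1) => (h n).2.1 o ho
    have hsucc : ∀ x : Ordinal, x < omega1 → Order.succ x < omega1 :=
      fun x hx => omega1_isLimit.succ_lt hx
    -- build an increasing sequence hitting each `C n` cofinally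
    let a : ℕ → {x : Ordinal // x < omega1} := fun k => Nat.rec ⟨o, ho⟩
      (fun k p => ⟨max (Order.succ p.1)
          ((Finset.range (k+1)).sup fun n => g n (Order.succ p.1) (hsucc _ p.2)),
        by
          refine max_lt (hsucc _ p.2) ?_
          refine Finset.sup_lt_iff (omega1_isLimit.pos) |>.2 fun n _ => ?_
          exact (h n).1 (hg1 n _ (hsucc _ p.2)) ⟩) k
    have ha_step : ∀ k, (a k).1 < (a (k+1)).1 := fun k =>
      lt_of_lt_of_le (Order.lt_succ _) (le_max_left _ _)
    have ha_mono : StrictMono fun k => (a k).1 := strictMono_nat_of_lt_succ ha_step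
    have hrec : ∀ k, (a (k+1)).1 = max (Order.succ (a k).1)
        ((Finset.range (k+1)).sup fun n => g n (Order.succ (a k).1) (hsucc _ (a k).2)) :=
      fun k => rfl
    have ha_hit : ∀ n k, n ≤ k → ∃ c ∈ C n, (a k).1 < c ∧ c ≤ (a (k+1)).1 := by
      intro n k hnk
      refine ⟨g n (Order.succ (a k).1) (hsucc _ (a k).2), hg1 _ _ _, ?_, ?_⟩
      · exact lt_of_lt_of_le (Order.lt_succ _) (hg2 _ _ _)
      · rw [hrec k]
        exact le_trans (Finset.le_sup (f := fun n => g n (Order.succ (a k).1) (hsucc _ (a k).2))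
          (Finset.mem_range.2 (Nat.lt_succ_of_le hnk))) (le_max_right _ _)
    set lam := ⨆ k, (a k).1 with hlam
    have hbdd : BddAbove (Set.range fun k => (a k).1) := Ordinal.bddAbove_range _
    have hak_lt : ∀ k, (a k).1 < lam := fun k =>
      lt_of_lt_of_le (ha_step k) (le_ciSup hbdd (k+1))
    have hlt_iff : ∀ p, p < lam → ∃ k, p < (a k).1 := fun p hp =>
      (lt_ciSup_iff hbdd).1 hp
    have hlam_lt : lam < omega1 := iSup_lt_omega1 _ fun k => (a k).2
    have hlam_limit : Order.IsSuccLimit lam := by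
      rw [Ordinal.isSuccLimit_iff, Order.isSuccPrelimit_iff_succ_lt]
      constructor
      · exact fun h0 => absurd (hak_lt 0) (by simp [h0, not_lt_zero])
      · intro p hp
        obtain ⟨k, hk⟩ := hlt_iff p hp
        exact lt_of_le_of_lt (Order.succ_le_of_lt hk) (hak_lt k)
    refine ⟨lam, Set.mem_iInter.2 fun n => ?_, le_of_lt (hak_lt 0)⟩
    apply (h n).2.2 lam hlam_lt hlam_limit
    intro p hp
    obtain ⟨k, hk⟩ := hlt_iff p hp
    obtain ⟨c, hc, hc1, hc2⟩ := ha_hit n (max k n) (le_max_right _ _)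
    refine ⟨c, hc, ?_, lt_of_le_of_lt hc2 (hak_lt (max k n + 1))⟩
    exact lt_of_lt_of_le hk (le_trans (ha_mono.monotone (le_max_left k n)) (le_of_lt hc1))
  · intro o ho holim hcl
    refine Set.mem_iInter.2 fun n => (h n).2.2 o ho holim fun p hp => ?_
    obtain ⟨c, hc, h1, h2⟩ := hcl p hp
    exact ⟨c, Set.mem_iInter.1 hc n, h1, h2⟩

lemma club_inter {C D : Set Ordinal} (hC : IsClubInOmega1 C) (hD : IsClubInOmega1 D) :
    IsClubInOmega1 (C ∩ D) := by
  have := club_iInter (fun n => Nat.rec C (fun _ _ => D) n)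
    (by intro n; cases n <;> assumption)
  convert this using 1
  ext x
  simp only [Set.mem_iInter, Set.mem_inter_iff]
  constructor
  · rintro ⟨h1, h2⟩ n; cases n <;> assumption
  · intro h; exact ⟨h 0, h 1⟩

lemma club_Ioi (β : Ordinal) (hβ : β < omega1) :
    IsClubInOmega1 (Set.Ioi β ∩ Set.Iio omega1) := by
  refine ⟨fun x hx => hx.2, ?_, ?_⟩
  · intro o ho
    refine ⟨max o (Order.succ β), ⟨?_, ?_⟩, le_max_left _ _⟩
    · exact lt_of_lt_of_le (Order.lt_succ β) (le_max_right _ _)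
    · exact max_lt ho (omega1_isLimit.succ_lt hβ)
  · intro o ho holim hcl
    obtain ⟨c, hc, _, hco⟩ := hcl 0 holim.pos
    exact ⟨lt_trans hc.1 hco, ho⟩

lemma stationary_superset {S T : Set Ordinal} (hS : IsStationaryInOmega1 S)
    (hST : S ⊆ T) (hT : T ⊆ Set.Iio omega1) : IsStationaryInOmega1 T := by
  refine ⟨hT, fun C hC => ?_⟩
  obtain ⟨x, hx1, hx2⟩ := hS.2 C hC
  exact ⟨x, hST hx1, hx2⟩

/-- Key fact: an open set containing a stationary set contains a final segment of `ω₁`. -/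
lemma final_segment_of_open {U Y : Set Ordinal} (hU : IsOpen U)
    (hY : IsStationaryInOmega1 Y) (hYU : Y ⊆ U) :
    ∃ β, β < omega1 ∧ ∀ α, β < α → α < omega1 → α ∈ U := by
  by_contra hc
  push_neg at hc
  have hclub : IsClubInOmega1 {α | α < omega1 ∧ α ∉ U} := by
    refine ⟨fun x hx => hx.1, ?_, ?_⟩
    · intro o ho
      obtain ⟨α, h1, h2, h3⟩ := hc o ho
      exact ⟨α, ⟨h2, h3⟩, le_of_lt h1⟩
    · intro o ho holim hcl
      refine ⟨ho, fun hoU => ?_⟩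
      obtain ⟨l, hl, hIoc⟩ := exists_Ioc_subset_of_mem_nhds (hU.mem_nhds hoU)
        ⟨0, holim.pos⟩
      obtain ⟨c, hcC, h1, h2⟩ := hcl l hl
      exact hcC.2 (hIoc ⟨h1, le_of_lt h2⟩)
  obtain ⟨y, hyY, hy⟩ := hY.2 _ hclub
  exact hy.2 (hYU hyY)

lemma exists_inj_nat (α : Ordinal) (hα : α < omega1) :
    ∃ f : Ordinal → ℕ, ∀ x, x < α → ∀ y, y < α → f x = f y → x = y := by
  have hcard : (Set.Iio α).Countable := by
    have h1 : α.card < Cardinal.aleph 1 := Cardinal.lt_ord.1 hα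
    have h2 : α.card ≤ Cardinal.aleph0 := by
      rwa [← Cardinal.succ_aleph0, Order.lt_succ_iff] at h1
    rw [← Cardinal.le_aleph0_iff_set_countable, Ordinal.mk_Iio_ordinal]
    exact le_of_le_of_eq (Cardinal.lift_le.2 h2) Cardinal.lift_aleph0
  obtain ⟨f, hf⟩ := Set.countable_iff_exists_injective.1 hcard
  refine ⟨fun x => if h : x < α then f ⟨x, h⟩ else 0, fun x hx y hy hxy => ?_⟩
  simp only [dif_pos hx, dif_pos hy] at hxy
  exact congrArg Subtype.val (hf hxy)


lemma stationary_tail {S : Set Ordinal} (hS : IsStationaryInOmega1 S)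
    {C : Set Ordinal} (hC : IsClubInOmega1 C) :
    IsStationaryInOmega1 (S ∩ C) := by
  refine ⟨fun x hx => hS.1 hx.1, fun D hD => ?_⟩
  obtain ⟨x, hx1, hx2⟩ := hS.2 _ (club_inter hC hD)
  exact ⟨x, ⟨hx1, hx2.1⟩, hx2.2⟩

/-- Ulam-type argument: every stationary subset of `ω₁` contains countably many
pairwise disjoint stationary subsets. -/
lemma exists_disjoint_stationary (S : Set Ordinal) (hS : IsStationaryInOmega1 S) :
    ∃ T : ℕ → Set Ordinal, (∀ k, T k ⊆ S) ∧ (∀ k, IsStationaryInOmega1 (T k)) ∧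
      ∀ k l, k ≠ l → ∀ x, x ∈ T k → x ∉ T l := by
  choose e he using fun (α : Ordinal) (hα : α < omega1) => exists_inj_nat α hα
  set A : ℕ → Ordinal → Set Ordinal :=
    fun n β => {α | ∃ h : α ∈ S, β < α ∧ e α (hS.1 h) β = n} with hA
  -- for every β there is n with A n β stationary
  have step1 : ∀ β, β < omega1 → ∃ n, IsStationaryInOmega1 (A n β) := by
    intro β hβ
    by_contra hcon
    push_neg at hcon
    have hsub : ∀ n, A n β ⊆ Set.Iio omega1 := fun n α hα => hS.1 hα.1
    have hclubs : ∀ n, ∃ C, IsClubInOmega1 C ∧ A n β ∩ C = ∅ := by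
      intro n
      have := hcon n
      rw [IsStationaryInOmega1] at this
      push_neg at this
      obtain ⟨C, hC1, hC2⟩ := this (hsub n)
      exact ⟨C, hC1, hC2⟩
    choose Cf hCf1 hCf2 using hclubs
    have hbig : IsClubInOmega1 ((⋂ n, Cf n) ∩ (Set.Ioi β ∩ Set.Iio omega1)) :=
      club_inter (club_iInter Cf hCf1) (club_Ioi β hβ)
    obtain ⟨α, hαS, hαC⟩ := hS.2 _ hbig
    set n := e α (hS.1 hαS) β with hn
    have : α ∈ A n β ∩ Cf n := ⟨⟨hαS, hαC.2.1, rfl⟩, Set.mem_iInter.1 hαC.1 n⟩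
    rw [hCf2 n] at this
    exact this
  -- pick for each β < ω₁ such an n; some n has infinite fiber
  choose N hN using step1
  set N' : Ordinal → ℕ := fun β => if h : β < omega1 then N β h else 0 with hN'
  have hfib : ∃ n, {β | β < omega1 ∧ N' β = n}.Infinite := by
    by_contra hcon
    push_neg at hcon
    have : (Set.Iio omega1).Countable := by
      have : Set.Iio omega1 = ⋃ n, {β | β < omega1 ∧ N' β = n} := by
        ext β
        simp only [Set.mem_Iio, Set.mem_iUnion, Set.mem_setOf_eq]
        exact ⟨fun h => ⟨N' β, h, rfl⟩, fun ⟨n, h, _⟩ => h⟩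
      rw [this]
      exact Set.countable_iUnion fun n => (hcon n).countable
    rw [Set.countable_iff_exists_injective] at this
    obtain ⟨f, hf⟩ := this
    have h1 : Cardinal.mk (Set.Iio omega1) ≤ Cardinal.aleph0 :=
      Cardinal.mk_le_aleph0_iff.2 ⟨⟨f, hf⟩⟩
    rw [Ordinal.mk_Iio_ordinal, omega1, Cardinal.card_ord] at h1
    rw [← Cardinal.lift_aleph0.{u_1 + 1, u_1}] at h1
    exact absurd (Cardinal.lift_le.1 h1) (not_le.2 Cardinal.aleph0_lt_aleph_one)
  obtain ⟨n₀, hinf⟩ := hfib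
  set b := hinf.natEmbedding _ with hb
  refine ⟨fun k => A n₀ (b k).1, fun k α hα => hα.1, fun k => ?_, ?_⟩
  · have key : ∀ β (h : β < omega1), N β h = n₀ → IsStationaryInOmega1 (A n₀ β) :=
      fun β h hh => hh ▸ hN β h
    have hbk := (b k).2
    have hNk : N (b k).1 hbk.1 = n₀ := by
      have h2 : (if h : (b k).1 < omega1 then N _ h else 0) = n₀ := hbk.2
      rwa [dif_pos hbk.1] at h2
    exact key (b k).1 hbk.1 hNk
  · intro k l hkl x hxk hxl
    obtain ⟨hxS, hk1, hk2⟩ := hxk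
    obtain ⟨_, hl1, hl2⟩ := hxl
    have : (b k).1 = (b l).1 :=
      he x (hS.1 hxS) _ hk1 _ hl1 (hk2.trans hl2.symm)
    exact hkl (b.injective (Subtype.ext this))


/-- If a family of open sets of the subspace `S` expands a family of stationary sets,
then there is a point of `S` lying in all of them. -/
lemma common_point {S : Set Ordinal} (hS : IsStationaryInOmega1 S)
    (V : ℕ → Set S) (hopen : ∀ n, IsOpen (V n))
    (Y : ℕ → Set Ordinal) (hY : ∀ n, IsStationaryInOmega1 (Y n))
    (hYV : ∀ n, ∀ α, (hα : α ∈ Y n) → α ∈ S)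
    (hYV2 : ∀ n, ∀ α, (hα : α ∈ Y n) → (hs : α ∈ S) → (⟨α, hs⟩ : S) ∈ V n) :
    ∃ x : S, ∀ n, x ∈ V n := by
  have hU : ∀ n, ∃ W : Set Ordinal, IsOpen W ∧ Subtype.val ⁻¹' W = V n :=
    fun n => isOpen_induced_iff.1 (hopen n)
  choose W hW1 hW2 using hU
  have hYW : ∀ n, Y n ⊆ W n := by
    intro n α hα
    have hs := hYV n α hα
    have : (⟨α, hs⟩ : S) ∈ V n := hYV2 n α hα hs
    rw [← hW2 n] at this
    exact this
  have hfin : ∀ n, ∃ β, β < omega1 ∧ ∀ α, β < α → α < omega1 → α ∈ W n :=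
    fun n => final_segment_of_open (hW1 n) (hY n) (hYW n)
  choose β hβ1 hβ2 using hfin
  set B := ⨆ n, β n with hB
  have hBlt : B < omega1 := iSup_lt_omega1 β hβ1
  obtain ⟨x, hxS, hxC⟩ := hS.2 _ (club_Ioi B hBlt)
  refine ⟨⟨x, hxS⟩, fun n => ?_⟩
  have hx : x ∈ W n := hβ2 n x
    (lt_of_le_of_lt (le_ciSup (Ordinal.bddAbove_range β) n) hxC.1) hxC.2
  rw [← hW2 n]
  exact hx

/-- A stationary subset `S` of `ω₁` (with the subspace topology coming from the
order topology on the ordinals) is not a Δ-space; more precisely, any countable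
disjoint family of stationary subsets of `S` consisting of limit points of `S`
admits no point-finite open expansion in `S`. -/
theorem stationary_not_delta_space (S : Set Ordinal)
    (hS : IsStationaryInOmega1 S) :
    (¬ IsDeltaSpace S) ∧
      ∀ Sn : ℕ → Set Ordinal,
        (∀ n, Sn n ⊆ S) →
        (∀ n, IsStationaryInOmega1 (Sn n)) →
        (∀ n, ∀ α ∈ Sn n, ∀ β < α, ∃ γ ∈ S, β < γ ∧ γ < α) →
        (Pairwise fun m n => Disjoint (Sn m) (Sn n)) →
        ¬ ∃ U : ℕ → Set S, (∀ n, IsOpen (U n)) ∧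
            (∀ n, {x : S | (x : Ordinal) ∈ Sn n} ⊆ U n) ∧
            ∀ x : S, {n | x ∈ U n}.Finite := by
  constructor
  · -- not a Δ-space
    intro hdelta
    obtain ⟨T, hTS, hTstat, hTdisj⟩ := exists_disjoint_stationary S hS
    set D : ℕ → Set S := fun n => {x : S | ∃ k, n ≤ k ∧ (x : Ordinal) ∈ T k} with hD
    have hdec : ∀ n, D (n + 1) ⊆ D n := by
      rintro n x ⟨k, hk1, hk2⟩
      exact ⟨k, le_trans (Nat.le_succ n) hk1, hk2⟩
    have hempty : (⋂ n, D n) = ∅ := by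
      rw [Set.eq_empty_iff_forall_notMem]
      intro x hx
      obtain ⟨k₀, _, hk₀⟩ := Set.mem_iInter.1 hx 0
      obtain ⟨k₁, hk₁le, hk₁⟩ := Set.mem_iInter.1 hx (k₀ + 1)
      exact hTdisj k₀ k₁ (by omega) _ hk₀ hk₁
    obtain ⟨V, hVopen, _, hDV, hVempty⟩ := hdelta D hdec hempty
    -- each D n pulls back to a stationary set
    set Y : ℕ → Set Ordinal := fun n => {α | ∃ h : α ∈ S, (⟨α, h⟩ : S) ∈ D n} with hY
    have hYstat : ∀ n, IsStationaryInOmega1 (Y n) := by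
      intro n
      refine stationary_superset (hTstat n) ?_ (fun α hα => hS.1 hα.1)
      intro α hα
      exact ⟨hTS n hα, ⟨n, le_refl n, hα⟩⟩
    obtain ⟨x, hx⟩ := common_point hS V hVopen Y hYstat
      (fun n α hα => hα.1) (fun n α hα hs => hDV n hα.2)
    have : x ∈ ⋂ n, V n := Set.mem_iInter.2 hx
    rw [hVempty] at this
    exact this
  · -- no point-finite open expansion
    rintro Sn hSnS hSnstat _ _ ⟨U, hUopen, hUexp, hUfin⟩
    obtain ⟨x, hx⟩ := common_point hS U hUopen Sn hSnstat
      (fun n α hα => hSnS n hα) (fun n α hα hs => hUexp n hα)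
    have : {n | x ∈ U n} = Set.univ := Set.eq_univ_of_forall hx
    have hfin := hUfin x
    rw [this] at hfin
    exact Set.infinite_univ hfin
end

section
/- If X is a nonstationary subset of ω₁ with the subspace order topology, then X is a Q-space: every subset of X is a Gδ-set in X. -/
/-- Enumerate a countable set by a sequence of subsingleton pieces. -/
lemma countable_enum {α : Type*} {s : Set α} (hs : s.Countable) :
    ∃ F : ℕ → Set α, (∀ n, F n ⊆ s) ∧ (∀ n, (F n).Subsingleton) ∧ s ⊆ ⋃ n, F n := by
  haveI := hs.to_subtype
  obtain ⟨e, he⟩ := Countable.exists_injective_nat s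
  refine ⟨fun n => {z | ∃ h : z ∈ s, e ⟨z, h⟩ = n}, fun n z hz => hz.1, fun n z1 h1 z2 h2 => ?_,
    fun z hz => Set.mem_iUnion.mpr ⟨e ⟨z, hz⟩, hz, rfl⟩⟩
  obtain ⟨m1, hm1⟩ := h1
  obtain ⟨m2, hm2⟩ := h2
  have : (⟨z1, m1⟩ : s) = ⟨z2, m2⟩ := he (hm1.trans hm2.symm)
  exact congrArg Subtype.val this

/-- A nonstationary subset of `ω₁` (with the subspace topology) is a Q-space:
every subset of it is a Gδ-set. -/
theorem nonstationary_is_q_space (X : Set Ordinal)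
    (hX : X ⊆ Set.Iio omega1)
    (hns : ∃ C, IsClubInOmega1 C ∧ Disjoint X C) :
    ∀ A : Set X, IsGδ A := by
  classical
  obtain ⟨C, ⟨hC1, hC2, hC3⟩, hdisj⟩ := hns
  have hnotC : ∀ x : X, (x : Ordinal) ∉ C := fun x => Set.disjoint_left.mp hdisj x.2
  -- nonemptiness of the set of club elements above x
  have hne : ∀ x : X, {c | c ∈ C ∧ (x : Ordinal) < c}.Nonempty := by
    intro x
    obtain ⟨c, hcC, hxc⟩ := hC2 x.val (hX x.2)
    exact ⟨c, hcC, lt_of_le_of_ne hxc (fun h => hnotC x (h ▸ hcC))⟩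
  set g : X → Ordinal := fun x => sInf {c | c ∈ C ∧ (x : Ordinal) < c} with hg
  have hgmem : ∀ x : X, g x ∈ C ∧ (x : Ordinal) < g x := fun x => csInf_mem (hne x)
  have hgmin : ∀ x : X, ∀ c ∈ C, (x : Ordinal) < c → g x ≤ c :=
    fun x c hc hxc => csInf_le' ⟨hc, hxc⟩
  set Piece : Ordinal → Set X := fun c => {y | g y = c} with hPiece
  -- membership characterization on pieces of actual values
  have hmemiff : ∀ x y : X, g y = g x ↔
      ((y : Ordinal) < g x ∧ ∀ c' ∈ C, c' < g x → c' < (y : Ordinal)) := by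
    intro x y
    constructor
    · intro h
      refine ⟨h ▸ (hgmem y).2, fun c' hc' hlt => ?_⟩
      by_contra hyc
      push_neg at hyc
      have h1 : (y : Ordinal) < c' := lt_of_le_of_ne hyc (fun h => hnotC y (h ▸ hc'))
      exact absurd (hgmin y c' hc' h1) (by rw [h]; exact not_le.mpr hlt)
    · rintro ⟨h1, h2⟩
      have hle : g y ≤ g x := hgmin y (g x) (hgmem x).1 h1
      rcases lt_or_eq_of_le hle with hlt | heq
      · exact absurd (h2 (g y) (hgmem y).1 hlt) (lt_irrefl _ ∘ lt_trans (hgmem y).2)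
      · exact heq
  -- each piece is open
  have hopen : ∀ c : Ordinal, IsOpen (Piece c) := by
    intro c
    by_cases hc : ∃ x : X, g x = c
    · obtain ⟨x, rfl⟩ := hc
      set S : Set Ordinal := {c' | c' ∈ C ∧ c' < g x} with hS
      by_cases hSne : S.Nonempty
      · by_cases hmax : ∃ a ∈ S, ∀ b ∈ S, b ≤ a
        · obtain ⟨a, haS, hamax⟩ := hmax
          have : Piece (g x) = Subtype.val ⁻¹' (Set.Ioo a (g x)) := by
            ext y
            simp only [hPiece, Set.mem_setOf_eq, Set.mem_preimage, Set.mem_Ioo]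
            rw [hmemiff x y]
            constructor
            · rintro ⟨h1, h2⟩; exact ⟨h2 a haS.1 haS.2, h1⟩
            · rintro ⟨h1, h2⟩
              exact ⟨h2, fun c' hc' hlt => lt_of_le_of_lt (hamax c' ⟨hc', hlt⟩) h1⟩
          rw [this]
          exact isOpen_Ioo.preimage continuous_subtype_val
        · -- S nonempty with no max: the piece is empty
          push_neg at hmax
          exfalso
          set a : Ordinal := sSup S with ha
          have hbdd : BddAbove S := ⟨g x, fun b hb => le_of_lt hb.2⟩
          have hub : ∀ b ∈ S, b ≤ a := fun b hb => le_csSup hbdd hb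
          have hnotmem : a ∉ S := by
            intro h
            obtain ⟨b, hbS, hab⟩ := hmax a h
            exact absurd (hub b hbS) (not_le.mpr hab)
          have halt : ∀ b ∈ S, b < a := fun b hb => lt_of_le_of_ne (hub b hb)
            (fun h => hnotmem (h ▸ hb))
          have hac : a ≤ g x := csSup_le hSne (fun b hb => le_of_lt hb.2)
          have haω : a < omega1 := lt_of_le_of_lt hac (hC1 (hgmem x).1)
          have hlim : Order.IsSuccLimit a := by
            obtain ⟨s, hsS⟩ := id hSne
            refine Ordinal.isSuccLimit_iff.mpr ⟨fun h0 => ?_, Order.isSuccPrelimit_iff_succ_lt.mpr fun b hb => ?_⟩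
            · exact absurd (halt s hsS) (by rw [h0]; exact not_lt_of_ge (zero_le (a := s)))
            · obtain ⟨t, htS, hbt⟩ := exists_lt_of_lt_csSup hSne hb
              exact lt_of_le_of_lt (Order.succ_le_of_lt hbt) (halt t htS)
          have haC : a ∈ C := by
            refine hC3 a haω hlim (fun p hp => ?_)
            obtain ⟨t, htS, hpt⟩ := exists_lt_of_lt_csSup hSne hp
            exact ⟨t, htS.1, hpt, halt t htS⟩
          rcases lt_or_eq_of_le hac with hlt | heq
          · exact hnotmem ⟨haC, hlt⟩
          · -- a = g x : then x itself can't exist in its own piece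
            have := (hmemiff x x).mp rfl
            have hxa : (x : Ordinal) < a := heq ▸ this.1
            obtain ⟨t, htS, hxt⟩ := exists_lt_of_lt_csSup hSne hxa
            exact absurd (this.2 t htS.1 htS.2) (not_lt.mpr (le_of_lt hxt))
      · -- no club element below g x
        have : Piece (g x) = Subtype.val ⁻¹' (Set.Iio (g x)) := by
          ext y
          simp only [hPiece, Set.mem_setOf_eq, Set.mem_preimage, Set.mem_Iio]
          rw [hmemiff x y]
          exact ⟨fun h => h.1, fun h => ⟨h, fun c' hc' hlt => absurd ⟨hc', hlt⟩
            (fun hmem => hSne ⟨c', hmem⟩)⟩⟩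
        rw [this]
        exact isOpen_Iio.preimage continuous_subtype_val
    · have : Piece c = ∅ := by
        ext y; simp only [hPiece, Set.mem_setOf_eq, Set.mem_empty_iff_false, iff_false]
        exact fun h => hc ⟨y, h⟩
      rw [this]; exact isOpen_empty
  -- each piece is countable
  have hcount : ∀ c : Ordinal, (Piece c).Countable := by
    intro c
    by_cases hc : ∃ x : X, g x = c
    · obtain ⟨x, rfl⟩ := hc
      have hIio : (Set.Iio (g x)).Countable := by
        rw [Cardinal.countable_iff_lt_aleph_one, Ordinal.mk_Iio_ordinal,
          Cardinal.lift_lt_aleph_one]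
        exact Cardinal.lt_ord.mp (hC1 (hgmem x).1)
      have hsub : Piece (g x) ⊆ Subtype.val ⁻¹' (Set.Iio (g x)) := by
        intro y hy
        exact ((hmemiff x y).mp hy).1
      exact (hIio.preimage Subtype.val_injective).mono hsub
    · have : Piece c = ∅ := by
        ext y; simp only [hPiece, Set.mem_setOf_eq, Set.mem_empty_iff_false, iff_false]
        exact fun h => hc ⟨y, h⟩
      rw [this]; exact Set.countable_empty
  intro A
  -- enumerate the non-members within each piece
  have hch : ∀ c : Ordinal, ∃ F : ℕ → Set X, (∀ n, F n ⊆ Piece c \ A) ∧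
      (∀ n, (F n).Subsingleton) ∧ Piece c \ A ⊆ ⋃ n, F n :=
    fun c => countable_enum (((hcount c).mono Set.diff_subset))
  choose F hF1 hF2 hF3 using hch
  set V : ℕ → Set X := fun n => ⋃ c : Ordinal, (Piece c \ F c n) with hV
  have hVopen : ∀ n, IsOpen (V n) := by
    intro n
    refine isOpen_iUnion (fun c => ?_)
    exact (hopen c).sdiff (hF2 c n).isClosed
  have hAeq : A = ⋂ n, V n := by
    ext z
    simp only [Set.mem_iInter]
    constructor
    · intro hz n
      refine Set.mem_iUnion.mpr ⟨g z, rfl, fun hmem => ?_⟩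
      exact (hF1 (g z) n hmem).2 hz
    · intro hz
      by_contra hzA
      have hznF : ∀ n, z ∉ F (g z) n := by
        intro n hn
        obtain ⟨c, hc⟩ := Set.mem_iUnion.mp (hz n)
        have hcz : g z = c := hc.1
        exact hc.2 (hcz ▸ hn)
      have : z ∈ Piece (g z) \ A := ⟨rfl, hzA⟩
      obtain ⟨n, hn⟩ := Set.mem_iUnion.mp (hF3 (g z) this)
      exact hznF n hn
  rw [hAeq]
  exact IsGδ.iInter (fun n => (hVopen n).isGδ)
end

section
/- For a subset X of ω₁ with the subspace topology, the following are equivalent: (1) X is nonstationary; (2) X is a Q-space; (3) X is a Δ-space. -/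
namespace NSHelper

open Cardinal Set Ordinal

universe u

theorem omega1_isLimit : Order.IsSuccLimit omega1.{u} := isSuccLimit_ord (Cardinal.aleph0_le_aleph 1)

theorem succ_lt_omega1 {a : Ordinal.{u}} (h : a < omega1) : a + 1 < omega1 := by
  rw [Ordinal.add_one_eq_succ]
  exact omega1_isLimit.succ_lt h

theorem lt_self_add_one (a : Ordinal.{u}) : a < a + 1 := by
  rw [Ordinal.add_one_eq_succ]; exact Order.lt_succ a

theorem seq_sup_lt (f : ℕ → Ordinal.{u}) (h : ∀ n, f n < omega1) : (⨆ n, f n) < omega1 :=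
  iSup_lt_ord_lift_of_isRegular isRegular_aleph_one (by simpa using aleph0_lt_aleph_one) h

theorem chain_sup (b : ℕ → Ordinal.{u}) (hlt : ∀ n, b n < omega1) (hmono : ∀ n, b n < b (n + 1)) :
    (⨆ n, b n) < omega1 ∧ Order.IsSuccLimit (⨆ n, b n) ∧ (∀ n, b n < ⨆ n, b n) := by
  have hbn : ∀ n, b n < ⨆ n, b n := fun n => lt_of_lt_of_le (hmono n) (Ordinal.le_iSup b (n + 1))
  refine ⟨seq_sup_lt b hlt, Ordinal.isSuccLimit_iff.mpr ⟨?_, Order.isSuccPrelimit_of_succ_lt ?_⟩, hbn⟩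
  · intro h0
    have := hbn 0
    rw [h0] at this
    exact lt_irrefl _ (lt_of_le_of_lt zero_le this)
  · intro a ha
    obtain ⟨n, hn⟩ := Ordinal.lt_iSup_iff.mp ha
    exact lt_of_le_of_lt (Order.succ_le_of_lt hn) (hbn n)

theorem countable_Iio {o : Ordinal.{u}} (ho : o < omega1) : (Set.Iio o).Countable := by
  rw [countable_iff_lt_aleph_one, Ordinal.mk_Iio_ordinal]
  rw [omega1, Cardinal.lt_ord] at ho
  calc Cardinal.lift.{u + 1} o.card < Cardinal.lift.{u + 1} (aleph 1) := by rwa [Cardinal.lift_lt]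
    _ = aleph 1 := by simp

theorem not_countable_Iio_omega1 : ¬ (Set.Iio omega1.{u}).Countable := by
  rw [countable_iff_lt_aleph_one, Ordinal.mk_Iio_ordinal, omega1, Cardinal.card_ord]
  simp

/-- The tail club. -/
theorem club_tail {o : Ordinal.{u}} (ho : o < omega1) :
    IsClubInOmega1 {c | o < c ∧ c < omega1} := by
  refine ⟨fun c hc => hc.2, fun p hp => ?_, fun o' ho' hlim hcof => ?_⟩
  · refine ⟨max o p + 1, ⟨?_, succ_lt_omega1 (max_lt ho hp)⟩, ?_⟩
    · exact lt_of_le_of_lt (le_max_left o p) (lt_self_add_one _)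
    · exact le_of_lt (lt_of_le_of_lt (le_max_right o p) (lt_self_add_one _))
  · obtain ⟨c, hc, h0c, hco'⟩ := hcof 0 hlim.pos
    exact ⟨lt_trans hc.1 hco', ho'⟩

theorem stationary_unbounded {S : Set Ordinal.{u}} (hS : IsStationaryInOmega1 S) {o : Ordinal}
    (ho : o < omega1) : ∃ α ∈ S, o < α ∧ α < omega1 := by
  obtain ⟨α, hαS, hα⟩ := hS.2 _ (club_tail ho)
  exact ⟨α, hαS, hα.1, hα.2⟩

theorem stationary_mono {S T : Set Ordinal.{u}} (hT : T ⊆ Set.Iio omega1) (hST : S ⊆ T)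
    (hS : IsStationaryInOmega1 S) : IsStationaryInOmega1 T :=
  ⟨hT, fun C hC => (hS.2 C hC).imp fun x hx => ⟨hST hx.1, hx.2⟩⟩

theorem not_stationary_iff {S : Set Ordinal.{u}} (hS : S ⊆ Set.Iio omega1) :
    ¬ IsStationaryInOmega1 S ↔ ∃ C, IsClubInOmega1 C ∧ S ∩ C = ∅ := by
  constructor
  · intro h
    rw [IsStationaryInOmega1] at h
    push_neg at h
    obtain ⟨C, hC, hC2⟩ := h hS
    exact ⟨C, hC, hC2⟩
  · rintro ⟨C, hC, hdisj⟩ ⟨_, h2⟩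
    obtain ⟨x, hx⟩ := h2 C hC
    rw [hdisj] at hx
    exact Set.notMem_empty x hx

/-- Countable intersections of clubs are clubs. -/
theorem club_inter_seq (C : ℕ → Set Ordinal.{u}) (h : ∀ i, IsClubInOmega1 (C i)) :
    IsClubInOmega1 (⋂ i, C i) := by
  refine ⟨fun c hc => (h 0).1 (Set.mem_iInter.mp hc 0), ?_, ?_⟩
  · intro o ho
    have step : ∀ x : Ordinal.{u}, x < omega1 → ∀ i : ℕ,
        ∃ c, c ∈ C i ∧ x < c ∧ c < omega1 := by
      intro x hx i
      obtain ⟨c, hc, hxc⟩ := (h i).2.1 (x + 1) (succ_lt_omega1 hx)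
      exact ⟨c, hc, lt_of_lt_of_le (lt_self_add_one x) hxc, (h i).1 hc⟩
    choose g hg1 hg2 hg3 using step
    let a : ℕ → {x : Ordinal.{u} // x < omega1} := fun n =>
      Nat.rec ⟨o, ho⟩ (fun k p => ⟨g p.1 p.2 (Nat.unpair k).1, hg3 p.1 p.2 (Nat.unpair k).1⟩) n
    have haS : ∀ k, (a (k + 1)).1 = g (a k).1 (a k).2 (Nat.unpair k).1 := fun k => rfl
    have hmono : ∀ k, (a k).1 < (a (k + 1)).1 := by
      intro k; rw [haS k]; exact hg2 (a k).1 (a k).2 (Nat.unpair k).1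
    have hlt : ∀ k, (a k).1 < omega1 := fun k => (a k).2
    obtain ⟨hsup, hlim, hbelow⟩ := chain_sup (fun k => (a k).1) hlt hmono
    set δ := ⨆ k, (a k).1 with hδ
    have hmonole : ∀ m n, m ≤ n → (a m).1 ≤ (a n).1 :=
      fun m n hmn => (strictMono_nat_of_lt_succ hmono).monotone hmn
    refine ⟨δ, Set.mem_iInter.mpr fun i => ?_, le_of_lt (hbelow 0)⟩
    refine (h i).2.2 δ hsup hlim ?_
    intro p hp
    obtain ⟨n, hn⟩ := Ordinal.lt_iSup_iff.mp hp
    set k := Nat.pair i n with hk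
    refine ⟨(a (k + 1)).1, ?_, ?_, hbelow (k + 1)⟩
    · have : (Nat.unpair k).1 = i := by rw [hk, Nat.unpair_pair]
      rw [haS k, this]; exact hg1 (a k).1 (a k).2 i
    · exact lt_of_lt_of_le hn (le_of_lt (lt_of_le_of_lt (hmonole n k (Nat.right_le_pair i n)) (hmono k)))
  · intro o ho hlim hcof
    refine Set.mem_iInter.mpr fun i => (h i).2.2 o ho hlim ?_
    intro p hp
    obtain ⟨c, hc, hpc, hco⟩ := hcof p hp
    exact ⟨c, Set.mem_iInter.mp hc i, hpc, hco⟩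

/-- The set of closure points of a function is a club. -/
theorem club_closurePoints (h : Ordinal.{u} → Ordinal.{u}) (hh : ∀ γ < omega1, h γ < omega1) :
    IsClubInOmega1 {δ | δ < omega1 ∧ Order.IsSuccLimit δ ∧ ∀ γ < δ, h γ < δ} := by
  refine ⟨fun c hc => hc.1, ?_, ?_⟩
  · intro o ho
    have key : ∀ x : Ordinal.{u}, x < omega1 →
        ∃ y, y < omega1 ∧ x < y ∧ ∀ γ < x, h γ < y := by
      intro x hx
      set B := Ordinal.blsub x (fun γ _ => if γ < omega1 then h γ else 0) with hB
      have hBlt : B < omega1 := by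
        refine blsub_lt_ord_of_isRegular isRegular_aleph_one ?_ ?_
        · show x.card < aleph 1
          rw [omega1, Cardinal.lt_ord] at hx; exact hx
        · intro a ha
          by_cases hao : a < omega1
          · rw [if_pos hao]; exact hh a hao
          · rw [if_neg hao]; exact omega1_isLimit.pos
      refine ⟨max B (x + 1), max_lt hBlt (succ_lt_omega1 hx), ?_, ?_⟩
      · exact lt_of_lt_of_le (lt_self_add_one x) (le_max_right _ _)
      · intro γ hγ
        have hγ1 : γ < omega1 := lt_trans hγ hx
        have : (if γ < omega1 then h γ else 0) < B := Ordinal.lt_blsub _ γ hγ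
        rw [if_pos hγ1] at this
        exact lt_of_lt_of_le this (le_max_left _ _)
    choose g hg1 hg2 hg3 using key
    let a : ℕ → {x : Ordinal.{u} // x < omega1} := fun n =>
      Nat.rec ⟨o, ho⟩ (fun _ p => ⟨g p.1 p.2, hg1 p.1 p.2⟩) n
    have haS : ∀ k, (a (k + 1)).1 = g (a k).1 (a k).2 := fun k => rfl
    have hmono : ∀ k, (a k).1 < (a (k + 1)).1 := fun k => hg2 (a k).1 (a k).2
    obtain ⟨hsup, hlim, hbelow⟩ := chain_sup (fun k => (a k).1) (fun k => (a k).2) hmono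
    set δ := ⨆ k, (a k).1 with hδ
    refine ⟨δ, ⟨hsup, hlim, ?_⟩, le_of_lt (hbelow 0)⟩
    intro γ hγ
    obtain ⟨n, hn⟩ := Ordinal.lt_iSup_iff.mp hγ
    exact lt_of_lt_of_le (hg3 (a n).1 (a n).2 γ hn) (le_of_lt (hbelow (n + 1)))
  · intro o ho hlim hcof
    refine ⟨ho, hlim, ?_⟩
    intro γ hγ
    obtain ⟨c, hc, hγc, hco⟩ := hcof γ hγ
    exact lt_trans (hc.2.2 γ hγc) hco

/-- A limit of points of a closed set belongs to the set. -/
theorem mem_closed_of_cofinal {K : Set Ordinal.{u}} (hK : IsClosed K) {o : Ordinal}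
    (ho : Order.IsSuccLimit o) (hcof : ∀ p < o, ∃ x ∈ K, p < x ∧ x < o) : o ∈ K := by
  by_contra h
  have hop := hK.isOpen_compl
  rw [Ordinal.isOpen_iff] at hop
  obtain ⟨a, ha, hsub⟩ := hop o h ho
  obtain ⟨x, hx, hax, hxo⟩ := hcof a ha
  exact hsub ⟨hax, hxo⟩ hx

section Gap

variable (C : Set Ordinal.{u})

noncomputable def cF (x : Ordinal.{u}) : Ordinal.{u} := sSup (C ∩ Set.Iio x)

noncomputable def mF (x : Ordinal.{u}) : Ordinal.{u} := sInf (C ∩ Set.Ioi x)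

def itv (c m : Ordinal.{u}) : Set Ordinal.{u} := if c = 0 then Set.Iio m else Set.Ioo c m

theorem itv_isOpen (c m : Ordinal.{u}) : IsOpen (itv c m) := by
  rw [itv]; split
  · exact isOpen_Iio
  · exact isOpen_Ioo

theorem itv_subset_Iio (c m : Ordinal.{u}) : itv c m ⊆ Set.Iio m := by
  rw [itv]; split
  · exact fun x hx => hx
  · exact fun x hx => hx.2

theorem mem_itv_iff {c m x : Ordinal.{u}} : x ∈ itv c m ↔ x < m ∧ (c < x ∨ c = 0) := by
  rw [itv]; split
  · simp_all
  · constructor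
    · rintro ⟨h1, h2⟩; exact ⟨h2, Or.inl h1⟩
    · rintro ⟨h1, h2 | h2⟩
      · exact ⟨h2, h1⟩
      · simp_all

variable {C}

theorem cF_le (x : Ordinal.{u}) : cF C x ≤ x :=
  csSup_le' (fun c hc => le_of_lt hc.2)

theorem cF_bddAbove (x : Ordinal.{u}) : BddAbove (C ∩ Set.Iio x) :=
  ⟨x, fun c hc => le_of_lt hc.2⟩

theorem cF_mem (hC : IsClubInOmega1 C) {x : Ordinal.{u}} (hx : x < omega1)
    (hne : (C ∩ Set.Iio x).Nonempty) : cF C x ∈ C := by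
  by_cases h : sSup (C ∩ Set.Iio x) ∈ C ∩ Set.Iio x
  · exact h.1
  · set s := C ∩ Set.Iio x with hs
    have hlt : ∀ c ∈ s, c < sSup s := fun c hc =>
      lt_of_le_of_ne (le_csSup (cF_bddAbove x) hc) (by rintro rfl; exact h hc)
    have hcof : ∀ p < sSup s, ∃ c ∈ C, p < c ∧ c < sSup s := by
      intro p hp
      obtain ⟨c, hc, hpc⟩ := exists_lt_of_lt_csSup hne hp
      exact ⟨c, hc.1, hpc, hlt c hc⟩
    have hlim : Order.IsSuccLimit (sSup s) := by
      refine Ordinal.isSuccLimit_iff.mpr ⟨?_, Order.isSuccPrelimit_of_succ_lt ?_⟩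
      · obtain ⟨c, hc⟩ := hne
        intro h0
        have := hlt c hc
        rw [h0] at this
        exact lt_irrefl _ (lt_of_le_of_lt zero_le this)
      · intro b hb
        obtain ⟨c, _, hbc, hcs⟩ := hcof b hb
        exact lt_of_le_of_lt (Order.succ_le_of_lt hbc) hcs
    exact hC.2.2 _ (lt_of_le_of_lt (cF_le x) hx) hlim hcof

theorem cF_lt (hC : IsClubInOmega1 C) {x : Ordinal.{u}} (hx : x < omega1) (hxC : x ∉ C)
    (hne : (C ∩ Set.Iio x).Nonempty) : cF C x < x := by
  refine lt_of_le_of_ne (cF_le x) ?_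
  intro h
  exact hxC (h ▸ cF_mem hC hx hne)

theorem mF_spec (hC : IsClubInOmega1 C) {x : Ordinal.{u}} (hx : x < omega1) :
    mF C x ∈ C ∧ x < mF C x ∧ mF C x < omega1 := by
  have hne : (C ∩ Set.Ioi x).Nonempty := by
    obtain ⟨c, hc, hle⟩ := hC.2.1 (x + 1) (succ_lt_omega1 hx)
    exact ⟨c, hc, lt_of_lt_of_le (lt_self_add_one x) hle⟩
  have := csInf_mem hne
  exact ⟨this.1, this.2, hC.1 this.1⟩

theorem no_club_in_gap {x : Ordinal.{u}} (hxC : x ∉ C) :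
    C ∩ Set.Ioo (cF C x) (mF C x) = ∅ := by
  ext c
  simp only [Set.mem_inter_iff, Set.mem_Ioo, Set.mem_empty_iff_false, iff_false]
  rintro ⟨hcC, hc1, hc2⟩
  rcases lt_trichotomy c x with h | h | h
  · exact absurd (le_csSup (cF_bddAbove x) ⟨hcC, h⟩) (not_le_of_gt hc1)
  · exact hxC (h ▸ hcC)
  · exact absurd (csInf_le' (show c ∈ C ∩ Set.Ioi x from ⟨hcC, h⟩)) (not_le_of_gt hc2)

theorem mem_own_itv (hC : IsClubInOmega1 C) {x : Ordinal.{u}} (hx : x < omega1) (hxC : x ∉ C) :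
    x ∈ itv (cF C x) (mF C x) := by
  rw [mem_itv_iff]
  refine ⟨(mF_spec hC hx).2.1, ?_⟩
  by_cases hne : (C ∩ Set.Iio x).Nonempty
  · exact Or.inl (cF_lt hC hx hxC hne)
  · right
    rw [cF, Set.not_nonempty_iff_eq_empty.mp hne]
    exact csSup_empty

theorem gap_eq (hC : IsClubInOmega1 C) {x y : Ordinal.{u}} (hx : x < omega1) (hxC : x ∉ C)
    (hy : y ∈ itv (cF C x) (mF C x)) : cF C y = cF C x ∧ mF C y = mF C x := by
  rw [mem_itv_iff] at hy
  obtain ⟨hym, hyc⟩ := hy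
  have hgap := no_club_in_gap (C := C) hxC
  have hnotin : ∀ c ∈ C, ¬(cF C x < c ∧ c < mF C x) := by
    intro c hc hcon
    have : c ∈ C ∩ Set.Ioo (cF C x) (mF C x) := ⟨hc, hcon.1, hcon.2⟩
    rw [hgap] at this
    exact this
  constructor
  · apply le_antisymm
    · refine csSup_le' ?_
      intro c hc
      by_contra hlt
      push_neg at hlt
      exact hnotin c hc.1 ⟨hlt, lt_trans hc.2 hym⟩
    · rcases hyc with hyc | hyc
      · refine csSup_le' ?_
        intro c hc
        exact le_csSup (cF_bddAbove y) ⟨hc.1, lt_of_le_of_lt (le_csSup (cF_bddAbove x) hc) hyc⟩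
      · rw [hyc]
        exact zero_le
  · apply le_antisymm
    · exact csInf_le' (show mF C x ∈ C ∩ Set.Ioi y from ⟨(mF_spec hC hx).1, hym⟩)
    · refine le_csInf ⟨mF C x, (mF_spec hC hx).1, hym⟩ ?_
      intro c hc
      by_contra hlt
      push_neg at hlt
      refine hnotin c hc.1 ⟨?_, hlt⟩
      rcases hyc with hyc | hyc
      · exact lt_trans hyc hc.2
      · rw [hyc]
        exact lt_of_le_of_lt zero_le hc.2

end Gap

theorem qspace_of_nonstationary {X : Set Ordinal.{u}} (hX : X ⊆ Set.Iio omega1)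
    (hns : ¬ IsStationaryInOmega1 X) : ∀ A : Set X, IsGδ A := by
  classical
  obtain ⟨C, hC, hXC⟩ := (not_stationary_iff hX).mp hns
  have hmemC : ∀ x ∈ X, x ∉ C := by
    intro x hx hc
    rw [Set.eq_empty_iff_forall_notMem] at hXC
    exact hXC x ⟨hx, hc⟩
  intro A
  set A' : Set Ordinal.{u} := Subtype.val '' A with hA'
  set Bs : Ordinal.{u} → Ordinal.{u} → Set Ordinal.{u} :=
    fun c m => (itv c m ∩ X) \ A' with hBs
  set e : Ordinal.{u} → Ordinal.{u} → ℕ → Ordinal.{u} := fun c m =>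
    if h : (Bs c m).Nonempty ∧ (Bs c m).Countable then Classical.choose (h.2.exists_eq_range h.1)
    else fun _ => m with he
  have he_pos : ∀ c m (h : (Bs c m).Nonempty ∧ (Bs c m).Countable),
      Bs c m = Set.range (e c m) := by
    intro c m h
    rw [he]
    simp only
    rw [dif_pos h]
    exact Classical.choose_spec (h.2.exists_eq_range h.1)
  have he_neg : ∀ c m, ¬((Bs c m).Nonempty ∧ (Bs c m).Countable) → ∀ n, e c m n = m := by
    intro c m h n
    rw [he]
    simp only
    rw [dif_neg h]
  set U : ℕ → Set ↥X := fun n =>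
    ⋃ x : ↥X, (Subtype.val ⁻¹' (itv (cF C x.1) (mF C x.1) \ {e (cF C x.1) (mF C x.1) n})) with hU
  have hUopen : ∀ n, IsOpen (U n) := by
    intro n
    exact isOpen_iUnion fun x =>
      ((itv_isOpen _ _).sdiff isClosed_singleton).preimage continuous_subtype_val
  have hAU : A = ⋂ n, U n := by
    apply Set.Subset.antisymm
    · intro a haA
      refine Set.mem_iInter.mpr fun n => Set.mem_iUnion.mpr ⟨a, ?_⟩
      simp only [Set.mem_preimage, Set.mem_diff, Set.mem_singleton_iff]
      refine ⟨mem_own_itv hC (hX a.2) (hmemC _ a.2), ?_⟩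
      intro hsing
      by_cases hcond : (Bs (cF C a.1) (mF C a.1)).Nonempty ∧ (Bs (cF C a.1) (mF C a.1)).Countable
      · have hr := he_pos _ _ hcond
        have haB : a.1 ∈ Bs (cF C a.1) (mF C a.1) := by
          rw [hr]
          exact ⟨n, hsing.symm⟩
        exact haB.2 ⟨a, haA, rfl⟩
      · have := he_neg _ _ hcond n
        rw [this] at hsing
        have halt : a.1 < mF C a.1 :=
          itv_subset_Iio _ _ (mem_own_itv hC (hX a.2) (hmemC _ a.2))
        rw [← hsing] at halt
        exact lt_irrefl _ halt
    · intro y hy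
      have hylt := hX y.2
      have hy' := Set.mem_iInter.mp hy
      have key : ∀ n, y.1 ∈ itv (cF C y.1) (mF C y.1) ∧ y.1 ≠ e (cF C y.1) (mF C y.1) n := by
        intro n
        obtain ⟨x, hx⟩ := Set.mem_iUnion.mp (hy' n)
        simp only [Set.mem_preimage, Set.mem_diff, Set.mem_singleton_iff] at hx
        obtain ⟨heq1, heq2⟩ := gap_eq hC (hX x.2) (hmemC _ x.2) hx.1
        rw [← heq1, ← heq2] at hx
        exact hx
      have hcnt : (Bs (cF C y.1) (mF C y.1)).Countable := by
        refine (countable_Iio (mF_spec hC hylt).2.2).mono ?_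
        intro z hz
        exact itv_subset_Iio _ _ hz.1.1
      have hmemitv : y.1 ∈ itv (cF C y.1) (mF C y.1) ∩ X := ⟨(key 0).1, y.2⟩
      have hyA' : y.1 ∈ A' := by
        by_cases hne : (Bs (cF C y.1) (mF C y.1)).Nonempty
        · have hr := he_pos _ _ ⟨hne, hcnt⟩
          by_contra hcon
          have hyB : y.1 ∈ Bs (cF C y.1) (mF C y.1) := ⟨hmemitv, hcon⟩
          rw [hr] at hyB
          obtain ⟨n, hn⟩ := hyB
          exact (key n).2 hn.symm
        · rw [Set.not_nonempty_iff_eq_empty] at hne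
          by_contra hcon
          have hyB : y.1 ∈ Bs (cF C y.1) (mF C y.1) := ⟨hmemitv, hcon⟩
          rw [hne] at hyB
          exact hyB
      obtain ⟨a, haA, hav⟩ := hyA'
      rwa [show a = y from Subtype.ext hav] at haA
  rw [hAU]
  exact IsGδ.iInter_of_isOpen hUopen

theorem delta_of_qspace {Y : Type*} [TopologicalSpace Y] (hQ : ∀ A : Set Y, IsGδ A) :
    IsDeltaSpace Y := by
  intro D hdec hempty
  have hant : Antitone D := antitone_nat_of_succ_le hdec
  have hrep : ∀ n : ℕ, ∃ f : ℕ → Set Y, (∀ m, IsOpen (f m)) ∧ D n = ⋂ m, f m := by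
    intro n
    obtain ⟨T, hT, hTc, hDn⟩ := hQ (D n)
    rcases T.eq_empty_or_nonempty with rfl | hne
    · exact ⟨fun _ => Set.univ, fun _ => isOpen_univ, by simpa using hDn⟩
    · obtain ⟨g, rfl⟩ := hTc.exists_eq_range hne
      exact ⟨g, fun m => hT _ (Set.mem_range_self m), by rw [hDn, Set.sInter_range]⟩
  choose f hfopen hfeq using hrep
  refine ⟨fun n => ⋂ i ∈ Finset.range (n + 1), ⋂ j ∈ Finset.range (n + 1), f i j, ?_, ?_, ?_, ?_⟩
  · intro n
    exact isOpen_biInter_finset fun i _ => isOpen_biInter_finset fun j _ => hfopen i j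
  · intro n y hy
    simp only [Set.mem_iInter, Finset.mem_range] at *
    intro i hi j hj
    exact hy i (Nat.lt_succ_of_lt hi) j (Nat.lt_succ_of_lt hj)
  · intro n y hy
    simp only [Set.mem_iInter, Finset.mem_range]
    intro i hi j hj
    have h1 : y ∈ D i := hant (Nat.lt_succ_iff.mp hi) hy
    rw [hfeq i] at h1
    exact Set.mem_iInter.mp h1 j
  · rw [Set.eq_empty_iff_forall_notMem]
    intro y hy
    have hyD : ∀ i, y ∈ D i := by
      intro i
      rw [hfeq i]
      refine Set.mem_iInter.mpr fun j => ?_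
      have hy' := Set.mem_iInter.mp hy (max i j)
      simp only [Set.mem_iInter, Finset.mem_range] at hy'
      exact hy' i (Nat.lt_succ_of_le (le_max_left i j)) j (Nat.lt_succ_of_le (le_max_right i j))
    have hmem := Set.mem_iInter.mpr hyD
    rw [hempty] at hmem
    exact hmem

theorem nonstationary_of_delta {X : Set Ordinal.{u}} (hX : X ⊆ Set.Iio omega1)
    (hd : IsDeltaSpace ↥X) : ¬ IsStationaryInOmega1 X := by
  intro hstat
  classical
  have hinj : ∀ β : Ordinal.{u}, β < omega1 → ∃ f : ↥(Set.Iio β) → ℕ, Function.Injective f := by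
    intro β hβ
    exact Set.countable_iff_exists_injective.mp (countable_Iio hβ)
  choose gI hgI using hinj
  set G : Ordinal.{u} → Ordinal.{u} → ℕ := fun β δ =>
    if h : β < omega1 ∧ δ < β then gI β h.1 ⟨δ, h.2⟩ else 0 with hG
  set Y : ℕ → Ordinal.{u} → Set Ordinal.{u} := fun n δ => {β | β ∈ X ∧ δ < β ∧ G β δ = n} with hY
  have hYsub : ∀ n δ, Y n δ ⊆ Set.Iio omega1 := fun n δ β hβ => hX hβ.1
  have hstep2 : ∀ δ < omega1, ∃ n, IsStationaryInOmega1 (Y n δ) := by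
    intro δ hδ
    by_contra hcon
    push_neg at hcon
    have hclubs : ∀ n, ∃ Cn, IsClubInOmega1 Cn ∧ Y n δ ∩ Cn = ∅ :=
      fun n => (not_stationary_iff (hYsub n δ)).mp (hcon n)
    choose Cn hCn1 hCn2 using hclubs
    set E : ℕ → Set Ordinal.{u} := fun i =>
      Nat.rec (motive := fun _ => Set Ordinal.{u}) {c | δ < c ∧ c < omega1} (fun k _ => Cn k) i
      with hE
    have hEclub : ∀ i, IsClubInOmega1 (E i) := by
      intro i
      cases i with
      | zero => exact club_tail hδ
      | succ k => exact hCn1 k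
    obtain ⟨β, hβX, hβE⟩ := hstat.2 _ (club_inter_seq E hEclub)
    have hβE' := Set.mem_iInter.mp hβE
    have hβ0 : δ < β ∧ β < omega1 := hβE' 0
    have hβY : β ∈ Y (G β δ) δ := ⟨hβX, hβ0.1, rfl⟩
    have hfin : β ∈ Y (G β δ) δ ∩ Cn (G β δ) := ⟨hβY, hβE' (G β δ + 1)⟩
    rw [hCn2 (G β δ)] at hfin
    exact hfin
  have hchoice : ∀ δ : Ordinal.{u}, ∃ n : ℕ, δ < omega1 → IsStationaryInOmega1 (Y n δ) := by
    intro δ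
    by_cases hδ : δ < omega1
    · obtain ⟨n, hn⟩ := hstep2 δ hδ
      exact ⟨n, fun _ => hn⟩
    · exact ⟨0, fun h => absurd h hδ⟩
  choose N hN using hchoice
  have hfib : ∃ n : ℕ, {δ : Ordinal.{u} | δ < omega1 ∧ N δ = n}.Infinite := by
    by_contra hcon
    push_neg at hcon
    have hcc : (Set.Iio omega1.{u}).Countable := by
      have hun : Set.Iio omega1.{u} = ⋃ n : ℕ, {δ | δ < omega1 ∧ N δ = n} := by
        ext δ
        simp only [Set.mem_Iio, Set.mem_iUnion, Set.mem_setOf_eq]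
        constructor
        · intro h
          exact ⟨N δ, h, rfl⟩
        · rintro ⟨n, h, _⟩
          exact h
      rw [hun]
      exact Set.countable_iUnion fun n => (hcon n).countable
    exact not_countable_Iio_omega1 hcc
  obtain ⟨nstar, hnstar⟩ := hfib
  set d := hnstar.natEmbedding with hd'
  set δs : ℕ → Ordinal.{u} := fun k => (d k).1 with hδs
  have hδs_lt : ∀ k, δs k < omega1 := fun k => (d k).2.1
  have hδs_stat : ∀ k, IsStationaryInOmega1 (Y nstar (δs k)) := by
    intro k
    have h2 := (d k).2.2
    rw [← h2]
    exact hN _ (hδs_lt k)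
  have hδs_inj : Function.Injective δs := fun k l h => d.injective (Subtype.ext h)
  have hdisj : ∀ k l, k ≠ l → Y nstar (δs k) ∩ Y nstar (δs l) = ∅ := by
    intro k l hkl
    rw [Set.eq_empty_iff_forall_notMem]
    rintro β ⟨⟨hβX, hk1, hk2⟩, ⟨_, hl1, hl2⟩⟩
    have hβω : β < omega1 := hX hβX
    simp only [hG] at hk2 hl2
    rw [dif_pos ⟨hβω, hk1⟩] at hk2
    rw [dif_pos ⟨hβω, hl1⟩] at hl2
    have heq := hgI β hβω (hk2.trans hl2.symm)
    have h2 : δs k = δs l := Subtype.mk_eq_mk.mp heq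
    exact hkl (hδs_inj h2)
  set D : ℕ → Set ↥X := fun n => {x | ∃ k, n ≤ k ∧ x.1 ∈ Y nstar (δs k)} with hD
  have hDdec : ∀ n, D (n + 1) ⊆ D n := by
    rintro n x ⟨k, hk, hxk⟩
    exact ⟨k, le_trans (Nat.le_succ n) hk, hxk⟩
  have hDempty : (⋂ n, D n) = ∅ := by
    rw [Set.eq_empty_iff_forall_notMem]
    intro x hx
    obtain ⟨k0, _, hk0⟩ := Set.mem_iInter.mp hx 0
    obtain ⟨k1, hk1le, hk1⟩ := Set.mem_iInter.mp hx (k0 + 1)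
    have hne : k0 ≠ k1 := by omega
    have hmem : x.1 ∈ Y nstar (δs k0) ∩ Y nstar (δs k1) := ⟨hk0, hk1⟩
    rw [hdisj k0 k1 hne] at hmem
    exact hmem
  obtain ⟨V, hVopen, hVdec, hDV, hVempty⟩ := hd D hDdec hDempty
  have hKn : ∀ n, ∃ K : Set Ordinal.{u}, IsClosed K ∧ (V n)ᶜ = Subtype.val ⁻¹' K := by
    intro n
    have hcl : IsClosed (V n)ᶜ := (hVopen n).isClosed_compl
    rw [isClosed_induced_iff] at hcl
    obtain ⟨K, hK1, hK2⟩ := hcl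
    exact ⟨K, hK1, hK2.symm⟩
  choose K hKclosed hKpre using hKn
  set W : ℕ → Set Ordinal.{u} := fun n => X ∩ K n with hW
  have hWns : ∀ n, ¬ IsStationaryInOmega1 (W n) := by
    intro n hWstat
    have hsel : ∀ γ : Ordinal.{u}, ∃ y : Ordinal.{u},
        γ < omega1 → (y ∈ W n ∧ γ < y ∧ y < omega1) := by
      intro γ
      by_cases hγ : γ < omega1
      · obtain ⟨y, hy1, hy2, hy3⟩ := stationary_unbounded hWstat hγ
        exact ⟨y, fun _ => ⟨hy1, hy2, hy3⟩⟩
      · exact ⟨0, fun h => absurd h hγ⟩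
    choose sf sh using hsel
    have hclub := club_closurePoints sf (fun γ hγ => (sh γ hγ).2.2)
    have hXclub : ∀ x ∈ X, x ∈ {δ | δ < omega1 ∧ Order.IsSuccLimit δ ∧ ∀ γ < δ, sf γ < δ} → x ∈ W n := by
      intro x hxX hxcl
      refine ⟨hxX, ?_⟩
      refine mem_closed_of_cofinal (hKclosed n) hxcl.2.1 ?_
      intro p hp
      have hpω : p < omega1 := lt_trans hp hxcl.1
      obtain ⟨hy1, hy2, hy3⟩ := sh p hpω
      exact ⟨sf p, hy1.2, hy2, hxcl.2.2 p hp⟩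
    have hYW : Y nstar (δs n) ∩ W n = ∅ := by
      rw [Set.eq_empty_iff_forall_notMem]
      rintro β ⟨hβY, hβW⟩
      have hβD : (⟨β, hβY.1⟩ : ↥X) ∈ D n := ⟨n, le_refl n, hβY⟩
      have hβV := hDV n hβD
      have hβc : (⟨β, hβY.1⟩ : ↥X) ∈ (V n)ᶜ := by
        rw [hKpre n]
        exact hβW.2
      exact hβc hβV
    obtain ⟨β, hβY, hβcl⟩ := (hδs_stat n).2 _ hclub
    have hβW : β ∈ W n := hXclub β hβY.1 hβcl
    have h2 : β ∈ Y nstar (δs n) ∩ W n := ⟨hβY, hβW⟩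
    rw [hYW] at h2
    exact h2
  have hQn : ∀ n, ∃ Q, IsClubInOmega1 Q ∧ W n ∩ Q = ∅ :=
    fun n => (not_stationary_iff (fun x hx => hX hx.1)).mp (hWns n)
  choose Q hQ1 hQ2 using hQn
  obtain ⟨y, hyX, hyQ⟩ := hstat.2 _ (club_inter_seq Q hQ1)
  have hyQ' := Set.mem_iInter.mp hyQ
  have hycompl : (⟨y, hyX⟩ : ↥X) ∈ ⋃ n, (V n)ᶜ := by
    rw [← Set.compl_iInter, hVempty]
    simp
  obtain ⟨n, hn⟩ := Set.mem_iUnion.mp hycompl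
  have hyW : y ∈ W n := ⟨hyX, by rw [hKpre n] at hn; exact hn⟩
  have h2 : y ∈ W n ∩ Q n := ⟨hyW, hyQ' n⟩
  rw [hQ2 n] at h2
  exact h2

end NSHelper

/-- For `X ⊆ ω₁` the following are equivalent: `X` is nonstationary, `X` is a
Q-space, and `X` is a Δ-space. -/
theorem nonstationary_tfae (X : Set Ordinal) (hX : X ⊆ Set.Iio omega1) :
    List.TFAE [¬ IsStationaryInOmega1 X,
      ∀ A : Set X, IsGδ A,
      IsDeltaSpace X] := by
  tfae_have 1 → 2 := fun h => NSHelper.qspace_of_nonstationary hX h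
  tfae_have 2 → 3 := fun h => NSHelper.delta_of_qspace h
  tfae_have 3 → 1 := fun h => NSHelper.nonstationary_of_delta hX h
  tfae_finish
end

section
/- If a topological space X admits a point-finite neighborhood assignment and F ⊆ X is a set of points each of which is a Gδ-point of X, then F is a Gδ-set in X. -/
/-- If `X` admits a point-finite neighborhood assignment and `F ⊆ X` consists of
Gδ-points of `X`, then `F` is a Gδ-set in `X`. -/
theorem gdelta_of_point_finite_neighborhood_assignment {X : Type*}
    [TopologicalSpace X] (N : X → Set X)
    (hopen : ∀ x, IsOpen (N x)) (hmem : ∀ x, x ∈ N x)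
    (hpf : ∀ u : X, {x : X | u ∈ N x}.Finite)
    (F : Set X) (hF : ∀ x ∈ F, IsGδ ({x} : Set X)) :
    IsGδ F := by
  classical
  -- choose, for each x ∈ F, a sequence of open sets intersecting to {x}
  have hch : ∀ x : F, ∃ f : ℕ → Set X, (∀ n, IsOpen (f n)) ∧ ({(x : X)} : Set X) = ⋂ n, f n :=
    fun x => (hF x x.2).eq_iInter_nat
  choose U hUopen hUeq using hch
  -- make them antitone
  set V : F → ℕ → Set X := fun x n => ⋂ i ∈ Finset.range (n + 1), U x i with hV
  have hVopen : ∀ x n, IsOpen (V x n) := fun x n =>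
    isOpen_biInter_finset fun i _ => hUopen x i
  have hVanti : ∀ (x : F) {m n : ℕ}, m ≤ n → V x n ⊆ V x m := by
    intro x m n hmn
    apply Set.biInter_subset_biInter_left
    intro i hi
    have := Finset.mem_range.1 hi
    exact Finset.mem_range.2 (by omega)
  have hVeq : ∀ x : F, (⋂ n, V x n) = {(x : X)} := by
    intro x
    rw [hUeq x]
    apply Set.Subset.antisymm
    · intro u hu
      simp only [Set.mem_iInter] at hu ⊢
      intro i
      have := hu i
      simp only [V, Set.mem_iInter] at this
      exact this i (by simp)
    · intro u hu
      simp only [Set.mem_iInter] at hu ⊢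
      intro n
      simp only [V, Set.mem_iInter]
      exact fun i _ => hu i
  have hxV : ∀ (x : F) (n : ℕ), (x : X) ∈ V x n := by
    intro x n
    have : (x : X) ∈ (⋂ n, V x n) := by rw [hVeq]; exact rfl
    exact Set.mem_iInter.1 this n
  -- the Gδ representation
  set W : ℕ → Set X := fun n => ⋃ x : F, (N x ∩ V x n) with hW
  have hWopen : ∀ n, IsOpen (W n) :=
    fun n => isOpen_iUnion fun x => (hopen x).inter (hVopen x n)
  have hFeq : F = ⋂ n, W n := by
    apply Set.Subset.antisymm
    · intro x hx
      simp only [Set.mem_iInter, W, Set.mem_iUnion]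
      exact fun n => ⟨⟨x, hx⟩, hmem x, hxV ⟨x, hx⟩ n⟩
    · intro u hu
      simp only [Set.mem_iInter, W, Set.mem_iUnion] at hu
      choose g hg1 hg2 using hu
      -- g : ℕ → F with u ∈ N (g n) and u ∈ V (g n) n
      set S := {x : X | u ∈ N x}
      have hfin : S.Finite := hpf u
      have : ∃ x : S, {n : ℕ | (⟨(g n : X), hg1 n⟩ : S) = x}.Infinite := by
        have : Finite S := hfin
        obtain ⟨x, hx⟩ := Finite.exists_infinite_fiber (fun n => (⟨(g n : X), hg1 n⟩ : S))
        refine ⟨x, Set.infinite_coe_iff.1 ?_⟩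
        convert hx using 2
        rfl
      obtain ⟨x, hx⟩ := this
      -- find the F-element corresponding to x
      obtain ⟨n0, hn0⟩ := hx.nonempty
      have hxF : (x : X) ∈ F := by rw [← hn0]; exact (g n0).2
      have hu_all : ∀ m, u ∈ V ⟨x, hxF⟩ m := by
        intro m
        obtain ⟨n, hn, hnm⟩ := hx.exists_gt m
        have h1 : (g n : X) = (x : X) := congrArg Subtype.val hn
        have : u ∈ V (g n) n := hg2 n
        have hgn : g n = ⟨x, hxF⟩ := Subtype.ext h1
        rw [hgn] at this
        exact hVanti ⟨x, hxF⟩ (le_of_lt hnm) this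
      have : u ∈ ⋂ m, V ⟨x, hxF⟩ m := Set.mem_iInter.2 hu_all
      rw [hVeq ⟨x, hxF⟩] at this
      rw [Set.mem_singleton_iff] at this
      rw [this]; exact hxF
  rw [hFeq]
  exact IsGδ.iInter_of_isOpen hWopen
end

section
/- No Souslin tree, equipped with the interval topology, is a Δ-space. -/
/-- Data exhibiting a partial order `T` as a Souslin tree of height `ω₁`:
the predecessors of any point form a chain enumerated by the height function,
there is a point at every level `β < ω₁`, and all levels, chains and
antichains are countable. -/
structure SouslinTreeData.{u_1, u_2} (T : Type u_1) [PartialOrder T] where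
  height : T → Ordinal.{u_2}
  height_lt : ∀ t, height t < omega1
  height_mono : ∀ s t : T, s < t → height s < height t
  pred_linear : ∀ t s₁ s₂ : T, s₁ < t → s₂ < t → s₁ ≤ s₂ ∨ s₂ ≤ s₁
  pred_exists : ∀ t : T, ∀ β < height t, ∃ s, s < t ∧ height s = β
  height_surj : ∀ β < omega1, ∃ t : T, height t = β
  levels_countable : ∀ β : Ordinal, {t : T | height t = β}.Countable
  chains_countable : ∀ C : Set T, IsChain (· ≤ ·) C → C.Countable
  antichains_countable : ∀ A : Set T,
    (A.Pairwise fun a b => ¬ a ≤ b ∧ ¬ b ≤ a) → A.Countable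

/-- The interval topology on a tree, generated by the half-open intervals
`(s, t]` together with the singletons of minimal elements. -/
def intervalTopology (T : Type*) [PartialOrder T] : TopologicalSpace T :=
  TopologicalSpace.generateFrom
    ({U | ∃ s t : T, U = {x | s < x ∧ x ≤ t}} ∪
     {U | ∃ t : T, (∀ s, ¬ s < t) ∧ U = {t}})

namespace SNDAux
open Cardinal Set Ordinal

universe u

lemma omega1_def : (omega1 : Ordinal.{u}) = (Cardinal.aleph 1).ord := rfl

lemma isLimit_omega1 : Order.IsSuccLimit (omega1 : Ordinal.{u}) :=
  Cardinal.isSuccLimit_ord (Cardinal.aleph0_le_aleph 1)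

lemma omega1_pos : (0 : Ordinal.{u}) < omega1 := isLimit_omega1.pos

lemma succ_lt_omega1 {a : Ordinal.{u}} (h : a < omega1) : a + 1 < omega1 := by
  rw [Ordinal.add_one_eq_succ]
  exact isLimit_omega1.succ_lt h

lemma exists_bound {S : Set Ordinal.{u}} (hS : S.Countable) (hlt : ∀ γ ∈ S, γ < omega1) :
    ∃ δ : Ordinal.{u}, δ < omega1 ∧ ∀ γ ∈ S, γ < δ := by
  have h1 : (insert 0 S).Countable := hS.insert 0
  obtain ⟨f, hf⟩ := h1.exists_eq_range ⟨0, mem_insert _ _⟩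
  have hfn : ∀ n, f n < omega1 := by
    intro n
    have : f n ∈ insert 0 S := by rw [hf]; exact mem_range_self n
    rcases this with h | h
    · rw [h]; exact omega1_pos
    · exact hlt _ h
  refine ⟨(⨆ n, f n + 1), ?_, ?_⟩
  · rw [omega1_def]
    apply Cardinal.iSup_lt_ord_lift_of_isRegular Cardinal.isRegular_aleph_one
    · rw [Cardinal.mk_nat, Cardinal.lift_aleph0]; exact Cardinal.aleph0_lt_aleph_one
    · intro n; exact succ_lt_omega1 (hfn n)
  · intro γ hγ
    have : γ ∈ range f := by rw [← hf]; exact mem_insert_of_mem _ hγ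
    obtain ⟨n, rfl⟩ := this
    calc f n < f n + 1 := by rw [Ordinal.add_one_eq_succ]; exact Order.lt_succ _
    _ ≤ _ := Ordinal.le_iSup (fun n => f n + 1) n

lemma Iio_countable {α : Ordinal.{u}} (h : α < omega1) : (Set.Iio α).Countable := by
  rw [Cardinal.countable_iff_lt_aleph_one, Ordinal.mk_Iio_ordinal]
  have h1 : α.card < Cardinal.aleph 1 := Cardinal.lt_ord.1 h
  have : (Cardinal.aleph 1 : Cardinal.{u+1}) = Cardinal.lift.{u+1} (Cardinal.aleph 1 : Cardinal.{u}) := by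
    rw [Cardinal.lift_aleph]; norm_num
  rw [this]
  exact Cardinal.lift_lt.2 h1

lemma Iio_omega1_not_countable : ¬ (Set.Iio (omega1 : Ordinal.{u})).Countable := by
  intro hc
  obtain ⟨δ, hδ, hb⟩ := exists_bound hc (fun γ hγ => hγ)
  exact absurd (hb δ hδ) (lt_irrefl δ)

/-- One closure step. -/
lemma closure_step (g : Ordinal.{u} → Ordinal.{u}) (hg : ∀ γ, g γ < omega1)
    {o : Ordinal.{u}} (ho : o < omega1) :
    ∃ o', o' < omega1 ∧ o < o' ∧ ∀ γ < o, g γ < o' := by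
  have hS : (insert o (g '' Set.Iio o)).Countable :=
    ((Iio_countable ho).image g).insert o
  have hlt : ∀ γ ∈ insert o (g '' Set.Iio o), γ < omega1 := by
    rintro γ (rfl | ⟨x, _, rfl⟩)
    · exact ho
    · exact hg x
  obtain ⟨δ, hδ, hb⟩ := exists_bound hS hlt
  exact ⟨δ, hδ, hb o (mem_insert _ _),
      fun γ hγ => hb _ (mem_insert_of_mem _ ⟨γ, hγ, rfl⟩)⟩

/-- Existence of closure points above any `β`. -/
lemma exists_closure (g : Ordinal.{u} → Ordinal.{u}) (hg : ∀ γ, g γ < omega1)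
    {β : Ordinal.{u}} (hβ : β < omega1) :
    ∃ l, l < omega1 ∧ β < l ∧ 0 < l ∧ ∀ γ < l, g γ < l := by
  have step : ∀ o : {x : Ordinal.{u} // x < omega1},
      ∃ o' : {x : Ordinal.{u} // x < omega1}, o.1 < o'.1 ∧ ∀ γ < o.1, g γ < o'.1 := by
    rintro ⟨o, ho⟩
    obtain ⟨o', h1, h2, h3⟩ := closure_step g hg ho
    exact ⟨⟨o', h1⟩, h2, h3⟩
  choose next hnext1 hnext2 using step
  let a : ℕ → {x : Ordinal.{u} // x < omega1} := fun n =>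
    Nat.rec ⟨β + 1, succ_lt_omega1 hβ⟩ (fun _ p => next p) n
  have ha0 : (a 0).1 = β + 1 := rfl
  have haS : ∀ n, a (n + 1) = next (a n) := fun n => rfl
  refine ⟨(⨆ n, (a n).1), ?_, ?_, ?_, ?_⟩
  · show _ < (Cardinal.aleph 1).ord
    apply Cardinal.iSup_lt_ord_lift_of_isRegular Cardinal.isRegular_aleph_one
    · rw [Cardinal.mk_nat, Cardinal.lift_aleph0]; exact Cardinal.aleph0_lt_aleph_one
    · intro n; exact (a n).2
  · calc β < β + 1 := by rw [Ordinal.add_one_eq_succ]; exact Order.lt_succ _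
      _ = (a 0).1 := ha0.symm
      _ ≤ _ := Ordinal.le_iSup (fun n => (a n).1) 0
  · calc (0 : Ordinal) ≤ β := zero_le
      _ < β + 1 := by rw [Ordinal.add_one_eq_succ]; exact Order.lt_succ _
      _ = (a 0).1 := ha0.symm
      _ ≤ _ := Ordinal.le_iSup (fun n => (a n).1) 0
  · intro γ hγ
    obtain ⟨n, hn⟩ := Ordinal.lt_iSup_iff.1 hγ
    calc g γ < (a (n+1)).1 := by rw [haS]; exact hnext2 _ _ hn
      _ ≤ _ := Ordinal.le_iSup (fun n => (a n).1) (n+1)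


/-- A set of ordinals is "stationary in ω₁" (in the weak sense we need):
it contains a nonzero closure point below ω₁ of every ordinal function
bounded by ω₁. -/
def Stat (S : Set Ordinal.{u}) : Prop :=
  ∀ g : Ordinal.{u} → Ordinal.{u}, (∀ γ, g γ < omega1) →
    ∃ l ∈ S, l < omega1 ∧ 0 < l ∧ ∀ γ < l, g γ < l

lemma Stat.mono {S S' : Set Ordinal.{u}} (h : S ⊆ S') (hS : Stat S) : Stat S' :=
  fun g hg => let ⟨l, hl, h2⟩ := hS g hg; ⟨l, h hl, h2⟩

lemma stat_Iio : Stat (Set.Iio (omega1 : Ordinal.{u})) := by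
  intro g hg
  obtain ⟨l, h1, _, h3, h4⟩ := exists_closure g hg omega1_pos
  exact ⟨l, h1, h1, h3, h4⟩

lemma sup_nat_lt_omega1 (f : ℕ → Ordinal.{u}) (hf : ∀ n, f n < omega1) :
    (⨆ n, f n) < omega1 := by
  show _ < (Cardinal.aleph 1).ord
  apply Cardinal.iSup_lt_ord_lift_of_isRegular Cardinal.isRegular_aleph_one
  · rw [Cardinal.mk_nat, Cardinal.lift_aleph0]; exact Cardinal.aleph0_lt_aleph_one
  · exact hf

lemma exists_avoid (A : ℕ → Set Ordinal.{u}) (hA : ∀ n, ¬ Stat (A n)) {β : Ordinal.{u}}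
    (hβ : β < omega1) :
    ∃ l, l < omega1 ∧ β < l ∧ 0 < l ∧ ∀ n, l ∉ A n := by
  have h : ∀ n, ∃ g : Ordinal.{u} → Ordinal.{u}, (∀ γ, g γ < omega1) ∧
      ¬ ∃ l ∈ A n, l < omega1 ∧ 0 < l ∧ ∀ γ < l, g γ < l := by
    intro n
    obtain ⟨g, hg⟩ := not_forall.1 (hA n)
    obtain ⟨h1, h2⟩ := Classical.not_imp.1 hg
    exact ⟨g, h1, h2⟩
  choose gs hgs1 hgs2 using h
  have hg : ∀ γ, ((⨆ n, gs n γ) + 1) < omega1 := fun γ =>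
    succ_lt_omega1 (sup_nat_lt_omega1 _ (fun n => hgs1 n γ))
  obtain ⟨l, h1, h2, h3, h4⟩ := exists_closure _ hg hβ
  refine ⟨l, h1, h2, h3, fun n hl => ?_⟩
  apply hgs2 n
  refine ⟨l, hl, h1, h3, fun γ hγ => ?_⟩
  have : gs n γ ≤ (⨆ m, gs m γ) := Ordinal.le_iSup (fun m => gs m γ) n
  have h5 : (⨆ m, gs m γ) < (⨆ m, gs m γ) + 1 := by
    rw [Ordinal.add_one_eq_succ]; exact Order.lt_succ _
  exact lt_of_le_of_lt this (lt_trans h5 (h4 γ hγ))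

lemma exists_disjoint_stat :
    ∃ S' : ℕ → Set Ordinal.{u}, (∀ j, Stat (S' j)) ∧ (∀ j, S' j ⊆ Set.Iio omega1) ∧
      Pairwise fun i j => Disjoint (S' i) (S' j) := by
  classical
  -- injections into ℕ on initial segments
  have HE : ∀ α : Ordinal.{u}, ∃ f : {γ : Ordinal.{u} // γ < α} → ℕ,
      α < omega1 → Function.Injective f := by
    intro α
    by_cases h : α < omega1
    · obtain ⟨f, hf⟩ := Set.countable_iff_exists_injective.1 (Iio_countable h)
      refine ⟨fun x => f ⟨x.1, x.2⟩, fun _ => ?_⟩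
      intro x y hxy
      have := hf hxy
      ext
      exact congrArg Subtype.val this
    · exact ⟨fun _ => 0, fun h' => absurd h' h⟩
  choose E Einj using HE
  set A : ℕ → Ordinal.{u} → Set Ordinal.{u} :=
    fun n β => {α | α < omega1 ∧ ∃ h : β < α, E α ⟨β, h⟩ = n} with hAdef
  have claim1 : ∀ β, β < omega1 → ∃ n, Stat (A n β) := by
    intro β hβ
    by_contra hall
    push_neg at hall
    obtain ⟨l, h1, h2, _, h4⟩ := exists_avoid (fun n => A n β) hall hβ
    exact h4 (E l ⟨β, h2⟩) ⟨h1, h2, rfl⟩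
  have claim1' : ∀ β : Ordinal.{u}, ∃ n, β < omega1 → Stat (A n β) := by
    intro β
    by_cases h : β < omega1
    · obtain ⟨n, hn⟩ := claim1 β h
      exact ⟨n, fun _ => hn⟩
    · exact ⟨0, fun h' => absurd h' h⟩
  choose nfn hnfn using claim1'
  -- some fiber of nfn is infinite
  have hfib : ∃ m : ℕ, {β : Ordinal.{u} | β < omega1 ∧ nfn β = m}.Infinite := by
    by_contra hfin
    push_neg at hfin
    apply Iio_omega1_not_countable.{u}
    have hsub : Set.Iio (omega1 : Ordinal.{u}) ⊆
        ⋃ m : ℕ, {β : Ordinal.{u} | β < omega1 ∧ nfn β = m} := by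
      intro β hβ
      exact Set.mem_iUnion.2 ⟨nfn β, hβ, rfl⟩
    exact Set.Countable.mono hsub (Set.countable_iUnion fun m => (hfin m).countable)
  obtain ⟨m, hm⟩ := hfib
  have emb := hm.natEmbedding
  set b : ℕ → Ordinal.{u} := fun i => (emb i : Ordinal.{u}) with hbdef
  have hb : ∀ i, b i < omega1 ∧ nfn (b i) = m := fun i => (emb i).2
  have hbinj : Function.Injective b := Subtype.coe_injective.comp emb.injective
  refine ⟨fun j => A m (b j), ?_, ?_, ?_⟩
  · intro j
    have := hnfn (b j) (hb j).1
    rwa [(hb j).2] at this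
  · intro j α hα
    exact hα.1
  · intro i j hij
    rw [Set.disjoint_left]
    rintro α ⟨hα1, hi, hei⟩ ⟨_, hj, hej⟩
    apply hij
    have h2 := Einj α hα1 (hei.trans hej.symm)
    have h3 := Subtype.ext_iff.1 h2
    exact hbinj h3

lemma exists_sigma : ∃ Sg : ℕ → Set Ordinal.{u},
    (∀ k, Stat (Sg k)) ∧ (∀ k, Sg (k+1) ⊆ Sg k) ∧ (∀ k, Sg k ⊆ Set.Iio omega1) ∧
      Sg 0 = Set.Iio omega1 ∧ (⋂ k, Sg k) = ∅ := by
  obtain ⟨S', hstat, hsub, hdisj⟩ := exists_disjoint_stat.{u}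
  refine ⟨fun k => match k with
    | 0 => Set.Iio omega1
    | (k+1) => {γ | ∃ j, k + 1 ≤ j ∧ γ ∈ S' j}, ?_, ?_, ?_, rfl, ?_⟩
  · intro k
    match k with
    | 0 => exact stat_Iio
    | (k+1) => exact (hstat (k+1)).mono (fun γ hγ => ⟨k+1, le_refl _, hγ⟩)
  · intro k
    match k with
    | 0 => rintro γ ⟨j, _, hγ⟩; exact hsub j hγ
    | (k+1) => rintro γ ⟨j, hj, hγ⟩; exact ⟨j, le_trans (Nat.le_succ _) hj, hγ⟩
  · intro k
    match k with
    | 0 => exact le_refl _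
    | (k+1) => rintro γ ⟨j, _, hγ⟩; exact hsub j hγ
  · ext γ
    simp only [Set.mem_iInter, Set.mem_empty_iff_false, iff_false]
    intro hall
    obtain ⟨j₁, hj₁, hγ₁⟩ := hall 1
    obtain ⟨j₂, hj₂, hγ₂⟩ := hall (j₁ + 1)
    have hne : j₁ ≠ j₂ := by omega
    exact Set.disjoint_left.1 (hdisj hne) hγ₁ hγ₂


/-- Neighborhood basis lemma for the interval topology: any open set containing a
non-minimal point `x` contains an interval `(s, x]`. -/
lemma nbhd_basis {T : Type*} [PartialOrder T] (τ : SouslinTreeData T)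
    {U : Set T} (hU : TopologicalSpace.GenerateOpen
      ({U | ∃ s t : T, U = {x | s < x ∧ x ≤ t}} ∪
       {U | ∃ t : T, (∀ s, ¬ s < t) ∧ U = {t}}) U)
    {x : T} (hpred : ∃ s, s < x) :
    x ∈ U → ∃ s, s < x ∧ ∀ y, s < y → y ≤ x → y ∈ U := by
  induction hU with
  | basic V hV =>
      intro hx
      rcases hV with ⟨s, t, rfl⟩ | ⟨t, ht, rfl⟩
      · obtain ⟨h1, h2⟩ := hx
        exact ⟨s, h1, fun y hy1 hy2 => ⟨hy1, le_trans hy2 h2⟩⟩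
      · obtain ⟨s, hs⟩ := hpred
        rw [Set.mem_singleton_iff] at hx; subst hx
        exact absurd hs (ht s)
  | univ =>
      intro _
      obtain ⟨s, hs⟩ := hpred
      exact ⟨s, hs, fun y _ _ => trivial⟩
  | inter V W _ _ ihV ihW =>
      intro hx
      obtain ⟨s₁, hs₁, h1⟩ := ihV hx.1
      obtain ⟨s₂, hs₂, h2⟩ := ihW hx.2
      rcases τ.pred_linear x s₁ s₂ hs₁ hs₂ with h | h
      · exact ⟨s₂, hs₂, fun y hy1 hy2 => ⟨h1 y (lt_of_le_of_lt h hy1) hy2, h2 y hy1 hy2⟩⟩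
      · exact ⟨s₁, hs₁, fun y hy1 hy2 => ⟨h1 y hy1 hy2, h2 y (lt_of_le_of_lt h hy1) hy2⟩⟩
  | sUnion S _ ih =>
      intro hx
      obtain ⟨V, hV, hxV⟩ := hx
      obtain ⟨s, hs, h⟩ := ih V hV hxV
      exact ⟨s, hs, fun y h1 h2 => ⟨V, hV, h y h1 h2⟩⟩

end SNDAux

/-- No Souslin tree, equipped with the interval topology, is a Δ-space. -/
theorem souslin_tree_not_delta_space {T : Type*} [PartialOrder T]
    (τ : SouslinTreeData T) :
    ¬ @IsDeltaSpace T (intervalTopology T) := by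
  classical
  intro hΔ
  -- height is ≤-monotone
  have hheightle : ∀ a b : T, a ≤ b → τ.height a ≤ τ.height b := by
    intro a b hab
    rcases eq_or_lt_of_le hab with rfl | h
    · exact le_refl _
    · exact le_of_lt (τ.height_mono a b h)
  obtain ⟨Sg, hSgStat, hSgDec, hSgIio, hSg0, hSgInt⟩ := SNDAux.exists_sigma
  -- the decreasing sequence of sets
  set D : ℕ → Set T := fun n => {t | τ.height t ∈ Sg n} with hD
  have hDdec : ∀ n, D (n+1) ⊆ D n := fun n t ht => hSgDec n ht
  have hDint : (⋂ n, D n) = ∅ := by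
    ext t
    simp only [Set.mem_iInter, Set.mem_empty_iff_false, iff_false]
    intro hall
    have h1 : τ.height t ∈ ⋂ n, Sg n := Set.mem_iInter.2 fun n => hall n
    rw [hSgInt] at h1
    exact h1
  obtain ⟨V, hVopen, hVdec, hVsub, hVint⟩ := hΔ D hDdec hDint
  have hVanti : ∀ m n : ℕ, m ≤ n → V n ⊆ V m := by
    intro m n h
    induction n, h using Nat.le_induction with
    | base => exact subset_rfl
    | succ n hn ih => exact (hVdec n).trans ih
  -- the escape function
  have hex : ∀ t : T, ∃ n, t ∉ V n := by
    intro t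
    by_contra hall
    push_neg at hall
    have h1 : t ∈ ⋂ n, V n := Set.mem_iInter.2 hall
    rw [hVint] at h1
    exact h1
  set nf : T → ℕ := fun t => Nat.find (hex t) with hnf
  have hnf_spec : ∀ t, t ∉ V (nf t) := fun t => Nat.find_spec (hex t)
  have hmemV : ∀ t m, m < nf t → t ∈ V m := by
    intro t m hm
    have h1 := Nat.find_min (hex t) hm
    simpa using h1
  have hnf_gt : ∀ t n, τ.height t ∈ Sg n → n < nf t := by
    intro t n h
    by_contra hle
    push_neg at hle
    exact hnf_spec t (hVanti _ _ hle (hVsub n h))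
  have hnf_pos : ∀ t, 1 ≤ nf t := by
    intro t
    have h1 : τ.height t ∈ Sg 0 := by rw [hSg0]; exact τ.height_lt t
    have := hnf_gt t 0 h1
    omega
  -- interval extraction from openness
  have hIntv : ∀ x : T, (∃ s, s < x) → ∃ s, s < x ∧ ∀ y, s < y → y ≤ x → nf x ≤ nf y := by
    intro x hp
    have hxV : x ∈ V (nf x - 1) := hmemV x _ (by have := hnf_pos x; omega)
    have hopen : TopologicalSpace.GenerateOpen
      ({U | ∃ s t : T, U = {x | s < x ∧ x ≤ t}} ∪
       {U | ∃ t : T, (∀ s, ¬ s < t) ∧ U = {t}}) (V (nf x - 1)) := hVopen (nf x - 1)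
    obtain ⟨s, hs, h⟩ := SNDAux.nbhd_basis τ hopen hp hxV
    refine ⟨s, hs, fun y h1 h2 => ?_⟩
    have hy : y ∈ V (nf x - 1) := h y h1 h2
    have h3 : nf x - 1 < nf y := by
      by_contra hc
      push_neg at hc
      exact hnf_spec y (hVanti _ _ hc hy)
    have := hnf_pos x
    omega
  -- T is uncountable
  have hTuncount : ¬ (Set.univ : Set T).Countable := by
    intro hc
    apply SNDAux.Iio_omega1_not_countable
    apply Set.Countable.mono _ (hc.image τ.height)
    intro β hβ
    obtain ⟨t, ht⟩ := τ.height_surj β hβ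
    exact ⟨t, trivial, ht⟩
  -- uncountable subsets have unbounded heights
  have hUnbd : ∀ B : Set T, ¬ B.Countable → ∀ β, β < omega1 → ∃ b ∈ B, β < τ.height b := by
    intro B hB β hβ
    by_contra hc
    push_neg at hc
    apply hB
    have hsub : B ⊆ ⋃ γ ∈ Set.Iio (β+1), {t : T | τ.height t = γ} := by
      intro b hb
      have h1 : τ.height b ∈ Set.Iio (β+1) := by
        have h2 : β < β + 1 := by
          rw [Ordinal.add_one_eq_succ]; exact Order.lt_succ _
        exact lt_of_le_of_lt (hc b hb) h2
      exact Set.mem_biUnion h1 rfl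
    exact Set.Countable.mono hsub
      ((SNDAux.Iio_countable (SNDAux.succ_lt_omega1 hβ)).biUnion fun γ _ => τ.levels_countable γ)
  -- choose k with R k uncountable
  set R : ℕ → Set T := fun k => {x | nf x ≤ k} with hR
  have hRk : ∃ k, ¬ (R k).Countable := by
    by_contra h
    push_neg at h
    apply hTuncount
    apply Set.Countable.mono _ (Set.countable_iUnion fun k => h k)
    intro x _
    exact Set.mem_iUnion.2 ⟨nf x, show nf x ≤ nf x from le_refl _⟩
  obtain ⟨k, hk⟩ := hRk
  -- thinning: A = elements of R k all of whose extension-sets in R k are uncountable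
  set B0 : Set T := {x | x ∈ R k ∧ {y | y ∈ R k ∧ x < y}.Countable} with hB0
  have hMin : ∀ o : Ordinal, ∀ b, b ∈ B0 → τ.height b = o →
      ∃ m, m ∈ B0 ∧ m ≤ b ∧ ∀ y ∈ B0, ¬ y < m := by
    intro o
    induction o using Ordinal.induction with
    | h o ih =>
      intro b hb hbo
      by_cases hm : ∀ y ∈ B0, ¬ y < b
      · exact ⟨b, hb, le_refl _, hm⟩
      · push_neg at hm
        obtain ⟨y, hy, hyb⟩ := hm
        obtain ⟨m, h1, h2, h3⟩ := ih (τ.height y) (hbo ▸ τ.height_mono y b hyb) y hy rfl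
        exact ⟨m, h1, le_trans h2 (le_of_lt hyb), h3⟩
  set M : Set T := {m | m ∈ B0 ∧ ∀ y ∈ B0, ¬ y < m} with hM
  have hManti : M.Pairwise fun a b => ¬ a ≤ b ∧ ¬ b ≤ a := by
    intro a ha b hb hab
    constructor
    · intro h; exact hb.2 a ha.1 (lt_of_le_of_ne h hab)
    · intro h; exact ha.2 b hb.1 (lt_of_le_of_ne h (Ne.symm hab))
  have hMcnt := τ.antichains_countable M hManti
  have hB0cnt : B0.Countable := by
    have hsub : B0 ⊆ ⋃ m ∈ M, ({m} ∪ {y | y ∈ R k ∧ m < y}) := by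
      intro b hb
      obtain ⟨m, hm1, hm2, hm3⟩ := hMin (τ.height b) b hb rfl
      refine Set.mem_biUnion (show m ∈ M from ⟨hm1, hm3⟩) ?_
      rcases eq_or_lt_of_le hm2 with rfl | hlt
      · exact Or.inl rfl
      · exact Or.inr ⟨hb.1, hlt⟩
    apply Set.Countable.mono hsub
    apply Set.Countable.biUnion hMcnt
    intro m hm
    exact (Set.countable_singleton m).union hm.1.2
  set A : Set T := {x | x ∈ R k ∧ x ∉ B0} with hA
  have hAuncount : ¬ A.Countable := by
    intro h
    apply hk
    apply Set.Countable.mono _ (h.union hB0cnt)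
    intro x hx
    by_cases hxB : x ∈ B0
    · exact Or.inr hxB
    · exact Or.inl ⟨hx, hxB⟩
  have hAbig : ∀ x ∈ A, ¬ {y | y ∈ A ∧ x < y}.Countable := by
    rintro x ⟨hx1, hx2⟩ hc
    apply hx2
    refine ⟨hx1, ?_⟩
    apply Set.Countable.mono _ (hc.union hB0cnt)
    rintro y ⟨hy1, hy2⟩
    by_cases hyB : y ∈ B0
    · exact Or.inr hyB
    · exact Or.inl ⟨⟨hy1, hyB⟩, hy2⟩
  -- the downward closure W
  set W : Set T := {w | ∃ a, a ∈ A ∧ w ≤ a} with hWdef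
  have hAW : A ⊆ W := fun a ha => ⟨a, ha, le_refl a⟩
  have hWbig : ∀ w ∈ W, ¬ {a | a ∈ A ∧ w < a}.Countable := by
    rintro w ⟨a, ha, hwa⟩ hc
    rcases eq_or_lt_of_le hwa with rfl | hlt
    · exact hAbig w ha hc
    · apply hAbig a ha
      apply Set.Countable.mono _ hc
      rintro y ⟨hy1, hy2⟩
      exact ⟨hy1, lt_trans hlt hy2⟩
  have hWlev : ∀ β, β < omega1 → ∃ w ∈ W, τ.height w = β := by
    intro β hβ
    obtain ⟨a, ha, hab⟩ := hUnbd A hAuncount β hβ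
    obtain ⟨s, hs1, hs2⟩ := τ.pred_exists a β hab
    exact ⟨s, ⟨a, ha, le_of_lt hs1⟩, hs2⟩
  have hAnotin : ∀ a ∈ A, τ.height a ∉ Sg k := by
    rintro a ⟨ha1, _⟩ hin
    have h1 := hnf_gt a k hin
    have h2 : nf a ≤ k := ha1
    omega
  -- the sealing argument
  set Good : Ordinal → T → Prop := fun γ x => ∃ a, a ∈ A ∧ a < x ∧ γ < τ.height a with hGood
  set P : Ordinal → Set T :=
    fun γ => {v | v ∈ W ∧ ∀ x, x ∈ W → v ≤ x → τ.height x ∈ Sg k → Good γ x} with hP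
  set N : Ordinal → Set T :=
    fun γ => P γ ∪ {v | v ∈ W ∧ ∀ v', v' ∈ W → v ≤ v' → v' ∉ P γ} with hN
  have hNdense : ∀ γ : Ordinal, ∀ w ∈ W, ∃ v ∈ N γ, w ≤ v := by
    intro γ w hw
    by_cases h : ∃ v', v' ∈ W ∧ w ≤ v' ∧ v' ∈ P γ
    · obtain ⟨v', h1, h2, h3⟩ := h
      exact ⟨v', Or.inl h3, h2⟩
    · push_neg at h
      exact ⟨w, Or.inr ⟨hw, fun v' hv' hwv' hPv' => h v' hv' hwv' hPv'⟩, le_refl w⟩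
  -- maximal antichains in N γ
  have hzorn : ∀ γ : Ordinal, ∃ M0 : Set T,
      (M0 ⊆ N γ ∧ M0.Pairwise fun a b => ¬ a ≤ b ∧ ¬ b ≤ a) ∧
      ∀ M1, (M1 ⊆ N γ ∧ M1.Pairwise fun a b => ¬ a ≤ b ∧ ¬ b ≤ a) → M0 ⊆ M1 → M1 ⊆ M0 := by
    intro γ
    have hch : ∀ c ⊆ {B : Set T | B ⊆ N γ ∧ B.Pairwise fun a b => ¬ a ≤ b ∧ ¬ b ≤ a},
        IsChain (· ⊆ ·) c → ∃ ub ∈ {B : Set T | B ⊆ N γ ∧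
          B.Pairwise fun a b => ¬ a ≤ b ∧ ¬ b ≤ a}, ∀ s ∈ c, s ⊆ ub := by
      intro c hc hchain
      refine ⟨⋃₀ c, ⟨?_, ?_⟩, fun s hs => Set.subset_sUnion_of_mem hs⟩
      · rintro x ⟨s, hs, hxs⟩
        exact (hc hs).1 hxs
      · rintro a ⟨sa, hsa, ha⟩ b ⟨sb, hsb, hb⟩ hab
        rcases hchain.total hsa hsb with h | h
        · exact (hc hsb).2 (h ha) hb hab
        · exact (hc hsa).2 ha (h hb) hab
    obtain ⟨M0, hmax⟩ := zorn_subset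
      {B : Set T | B ⊆ N γ ∧ B.Pairwise fun a b => ¬ a ≤ b ∧ ¬ b ≤ a} hch
    exact ⟨M0, hmax.1, fun M1 h1 h2 => hmax.2 h1 h2⟩
  choose Mfun hMfun hMmax using hzorn
  -- strict height bounds for the antichains
  have hδ : ∀ γ : Ordinal, ∃ δ, δ < omega1 ∧ ∀ m ∈ Mfun γ, τ.height m < δ := by
    intro γ
    have hcnt := τ.antichains_countable _ (hMfun γ).2
    have hbd : ∀ γ' ∈ τ.height '' (Mfun γ), γ' < omega1 := by
      rintro γ' ⟨m, _, rfl⟩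
      exact τ.height_lt m
    obtain ⟨δ, hδ1, hδ2⟩ := SNDAux.exists_bound (hcnt.image τ.height) hbd
    exact ⟨δ, hδ1, fun m hm => hδ2 _ ⟨m, hm, rfl⟩⟩
  choose δf hδf1 hδf2 using hδ
  -- every high element of W lies above a member of the antichain
  have hC1 : ∀ γ : Ordinal, ∀ x ∈ W, δf γ < τ.height x → ∃ m ∈ Mfun γ, m < x := by
    intro γ x hx hδx
    obtain ⟨v, hvN, hxv⟩ := hNdense γ x hx
    have hcomp : ∃ m ∈ Mfun γ, m ≤ v ∨ v ≤ m := by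
      by_contra hno
      push_neg at hno
      have hvM : v ∉ Mfun γ := fun hv => (hno v hv).1 (le_refl v)
      have hins : insert v (Mfun γ) ⊆ N γ ∧
          (insert v (Mfun γ)).Pairwise fun a b => ¬ a ≤ b ∧ ¬ b ≤ a := by
        constructor
        · rintro y (rfl | hy)
          · exact hvN
          · exact (hMfun γ).1 hy
        · haveI : Std.Symm (fun a b : T => ¬ a ≤ b ∧ ¬ b ≤ a) := ⟨fun a b h => ⟨h.2, h.1⟩⟩
          rw [Set.pairwise_insert_of_symm]
          refine ⟨(hMfun γ).2, fun b hb _ => ?_⟩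
          obtain ⟨h1, h2⟩ := hno b hb
          exact ⟨h2, h1⟩
      have heq := hMmax γ _ hins (Set.subset_insert _ _)
      exact hvM (heq (Set.mem_insert v _))
    obtain ⟨m, hm, hcase⟩ := hcomp
    have hmh : τ.height m < δf γ := hδf2 γ m hm
    have hmv : m ≤ v := by
      rcases hcase with h | h
      · exact h
      · exfalso
        have h1 : τ.height x ≤ τ.height m := le_trans (hheightle x v hxv) (hheightle v m h)
        exact lt_irrefl _ (lt_trans hδx (lt_of_le_of_lt h1 hmh))
    -- now m < x
    have hmx : τ.height m < τ.height x := lt_trans hmh hδx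
    rcases eq_or_lt_of_le hxv with rfl | hxltv
    · refine ⟨m, hm, lt_of_le_of_ne hmv ?_⟩
      intro h; rw [h] at hmx; exact lt_irrefl _ hmx
    · have hmltv : m < v := by
        rcases eq_or_lt_of_le hmv with rfl | h
        · exfalso
          exact absurd (lt_of_lt_of_le hmx (hheightle x m (le_of_lt hxltv))) (lt_irrefl _)
        · exact h
      rcases τ.pred_linear v m x hmltv hxltv with h | h
      · refine ⟨m, hm, lt_of_le_of_ne h ?_⟩
        intro he; rw [he] at hmx; exact lt_irrefl _ hmx
      · exfalso
        exact absurd (lt_of_lt_of_le hmx (hheightle x m h)) (lt_irrefl _)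
  -- the sealed level: a closure point of δf inside Sg k
  obtain ⟨l, hlSg, hlω, hlpos, hlcl⟩ := hSgStat k (fun γ => δf γ) hδf1
  obtain ⟨x, hxW, hxh⟩ := hWlev l hlω
  have hGoodAll : ∀ γ, γ < l → Good γ x := by
    intro γ hγ
    by_contra hng
    have hδγ : δf γ < l := hlcl γ hγ
    obtain ⟨m, hmM, hmx⟩ := hC1 γ x hxW (by rw [hxh]; exact hδγ)
    have hmN : m ∈ N γ := (hMfun γ).1 hmM
    rcases hmN with hmP | hmBar
    · exact hng (hmP.2 x hxW (le_of_lt hmx) (by rw [hxh]; exact hlSg))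
    · have hmW : m ∈ W := hmBar.1
      have hγω : γ < omega1 := lt_trans hγ hlω
      obtain ⟨a, ⟨haA, hma⟩, hah⟩ := hUnbd {a | a ∈ A ∧ m < a} (hWbig m hmW) γ hγω
      have haW : a ∈ W := hAW haA
      have hanP := hmBar.2 a haW (le_of_lt hma)
      have hnall : ¬ ∀ x', x' ∈ W → a ≤ x' → τ.height x' ∈ Sg k → Good γ x' :=
        fun hall => hanP ⟨haW, hall⟩
      push_neg at hnall
      obtain ⟨x', hx'W, hax', hx'Sg, hx'ng⟩ := hnall
      rcases eq_or_lt_of_le hax' with heq | hlt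
      · exact hAnotin a haA (by rw [heq]; exact hx'Sg)
      · exact hx'ng ⟨a, haA, hlt, hah⟩
  -- final contradiction
  have hp : ∃ s, s < x := by
    obtain ⟨a, _, hax, _⟩ := hGoodAll 0 hlpos
    exact ⟨a, hax⟩
  obtain ⟨s, hsx, hs⟩ := hIntv x hp
  have hshl : τ.height s < l := by rw [← hxh]; exact τ.height_mono s x hsx
  obtain ⟨a, haA, hax, hah⟩ := hGoodAll (τ.height s) hshl
  have hsa : s < a := by
    rcases τ.pred_linear x s a hsx hax with h | h
    · rcases eq_or_lt_of_le h with rfl | h'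
      · exact absurd hah (lt_irrefl _)
      · exact h'
    · exact absurd (hheightle a s h) (not_le.2 hah)
  have h1 : nf x ≤ nf a := hs a hsa (le_of_lt hax)
  have h2 : k < nf x := hnf_gt x k (by rw [hxh]; exact hlSg)
  have h3 : nf a ≤ k := haA.1
  omega
end

section
/- Let D be an infinite set and 𝒜 an almost disjoint family of countably infinite subsets of D, and let Ψ(D,𝒜) be the associated Isbell–Mrówka-type space. Then Ψ(D,𝒜) is a Δ-space if and only if Ψ(D,𝒜) is countably metacompact. -/
/-- The Isbell–Mrówka-type space `Ψ(D, 𝒜)`, with underlying set `D ⊕ 𝒜`: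
points of `D` are isolated, and basic neighborhoods of `A ∈ 𝒜` are
`{A} ∪ (A \ F)` for finite `F ⊆ D`. -/
def psiTopology {D : Type*} (𝒜 : Set (Set D)) : TopologicalSpace (D ⊕ 𝒜) :=
  TopologicalSpace.generateFrom
    ({U | ∃ d : D, U = {Sum.inl d}} ∪
     {U | ∃ (A : 𝒜) (F : Finset D),
        U = insert (Sum.inr A) (Sum.inl '' ((A : Set D) \ (F : Set D)))})

section
variable {D : Type*} (𝒜 : Set (Set D))

lemma psi_isOpen_inl (s : Set (D ⊕ 𝒜)) (hs : ∀ x ∈ s, ∃ d : D, x = Sum.inl d) :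
    @IsOpen _ (psiTopology 𝒜) s := by
  letI : TopologicalSpace (D ⊕ 𝒜) := psiTopology 𝒜
  have h : s = ⋃ x ∈ s, {x} := by simp
  rw [h]
  refine isOpen_biUnion fun x hx => ?_
  obtain ⟨d, rfl⟩ := hs x hx
  exact TopologicalSpace.GenerateOpen.basic _ (Or.inl ⟨d, rfl⟩)

lemma psi_isOpen_compl_inr (T : Set 𝒜) :
    @IsOpen _ (psiTopology 𝒜) (Sum.inr '' T)ᶜ := by
  letI : TopologicalSpace (D ⊕ 𝒜) := psiTopology 𝒜
  have h : (Sum.inr '' T)ᶜ =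
      (⋃ d : D, ({Sum.inl d} : Set (D ⊕ 𝒜))) ∪
      ⋃ A ∈ Tᶜ, insert (Sum.inr A) (Sum.inl '' ((A : Set D) \ ((∅ : Finset D) : Set D))) := by
    ext x
    cases x with
    | inl d => simp
    | inr A =>
      simp only [Set.mem_compl_iff, Set.mem_image, Set.mem_union, Set.mem_iUnion,
        Set.mem_singleton_iff, Set.mem_insert_iff]
      constructor
      · intro hA
        refine Or.inr ⟨A, fun hA' => hA ⟨A, hA', rfl⟩, Or.inl rfl⟩
      · rintro (⟨d, hd⟩ | ⟨B, hB, h⟩)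
        · exact absurd hd (by simp)
        · rcases h with h | ⟨d, _, hd⟩
          · rintro ⟨C, hC, hCA⟩
            obtain rfl : C = A := Sum.inr_injective hCA
            cases h; exact hB hC
          · exact absurd hd (by simp)
  rw [h]
  refine IsOpen.union ?_ (isOpen_biUnion fun A hA => ?_)
  · exact isOpen_iUnion fun d => TopologicalSpace.GenerateOpen.basic _ (Or.inl ⟨d, rfl⟩)
  · exact TopologicalSpace.GenerateOpen.basic _ (Or.inr ⟨A, ∅, rfl⟩)

end

/-- A space is countably metacompact if every decreasing sequence of closed sets
with empty intersection has a decreasing open expansion with empty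
intersection. -/
def CountablyMetacompact (X : Type*) [TopologicalSpace X] : Prop :=
  ∀ D : ℕ → Set X, (∀ n, IsClosed (D n)) → (∀ n, D (n + 1) ⊆ D n) →
    (⋂ n, D n) = ∅ →
    ∃ V : ℕ → Set X, (∀ n, IsOpen (V n)) ∧ (∀ n, V (n + 1) ⊆ V n) ∧
      (∀ n, D n ⊆ V n) ∧ (⋂ n, V n) = ∅

/-- For an almost disjoint family `𝒜` of countably infinite subsets of an
infinite set `D`, the space `Ψ(D, 𝒜)` is a Δ-space iff it is countably
metacompact. -/
theorem psi_delta_iff_countably_metacompact {D : Type*} [Infinite D]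
    (𝒜 : Set (Set D))
    (hctble : ∀ A ∈ 𝒜, A.Countable ∧ A.Infinite)
    (hAD : ∀ A ∈ 𝒜, ∀ B ∈ 𝒜, A ≠ B → (A ∩ B).Finite) :
    @IsDeltaSpace (D ⊕ 𝒜) (psiTopology 𝒜) ↔
      @CountablyMetacompact (D ⊕ 𝒜) (psiTopology 𝒜) := by
  letI : TopologicalSpace (D ⊕ 𝒜) := psiTopology 𝒜
  constructor
  · intro hΔ S _ hdec hempty
    exact hΔ S hdec hempty
  · intro hCM S hdec hempty
    -- trace of S on 𝒜
    set C : ℕ → Set (D ⊕ 𝒜) := fun n => Sum.inr '' {A : 𝒜 | Sum.inr A ∈ S n} with hC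
    have hCsub : ∀ n, C n ⊆ S n := by
      rintro n x ⟨A, hA, rfl⟩; exact hA
    have hCclosed : ∀ n, IsClosed (C n) := fun n =>
      ⟨psi_isOpen_compl_inr 𝒜 _⟩
    have hCdec : ∀ n, C (n + 1) ⊆ C n := by
      rintro n x ⟨A, hA, rfl⟩; exact ⟨A, hdec n hA, rfl⟩
    have hCempty : (⋂ n, C n) = ∅ := by
      apply Set.eq_empty_of_subset_empty
      rw [← hempty]
      exact Set.iInter_mono hCsub
    obtain ⟨V, hVopen, hVdec, hVsub, hVempty⟩ := hCM C hCclosed hCdec hCempty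
    have hSanti : Antitone S := antitone_nat_of_succ_le hdec
    have hVanti : Antitone V := antitone_nat_of_succ_le hVdec
    refine ⟨fun n => V n ∪ (S n ∩ Set.range Sum.inl), fun n => ?_, fun n => ?_, fun n => ?_, ?_⟩
    · refine (hVopen n).union (psi_isOpen_inl 𝒜 _ ?_)
      rintro x ⟨_, d, rfl⟩; exact ⟨d, rfl⟩
    · exact Set.union_subset_union (hVdec n)
        (Set.inter_subset_inter_left _ (hdec n))
    · intro x hx
      cases x with
      | inl d => exact Or.inr ⟨hx, d, rfl⟩
      | inr A => exact Or.inl (hVsub n ⟨A, hx, rfl⟩)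
    · apply Set.eq_empty_iff_forall_notMem.mpr
      intro x hx
      rw [Set.mem_iInter] at hx
      by_cases hxV : ∀ n, x ∈ V n
      · rw [Set.eq_empty_iff_forall_notMem] at hVempty
        exact hVempty x (Set.mem_iInter.mpr hxV)
      · push_neg at hxV
        obtain ⟨n, hn⟩ := hxV
        have hxS : ∀ m, x ∈ S m := by
          intro m
          have : x ∈ S (max n m) := by
            rcases hx (max n m) with h | h
            · exact absurd (hVanti (le_max_left n m) h) hn
            · exact h.1
          exact hSanti (le_max_right n m) this
        rw [Set.eq_empty_iff_forall_notMem] at hempty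
        exact hempty x (Set.mem_iInter.mpr hxS)
end

section
/- If X is a topological space and every point of X has a neighborhood base of sets that are compact (X locally compact), and X is countably compact or compact, and X is a Δ-space, then X has no subset homeomorphic to a Souslin line; in particular, a Souslin line is not a Δ-space because a Souslin line is a Baire space partitioned into countably many dense subsets. -/
universe u v

/-- A Souslin line: a complete dense linear order without endpoints which, with
its order topology, is ccc but not separable. -/
def IsSouslinLine (L : Type*) [LinearOrder L] [TopologicalSpace L]
    [OrderTopology L] : Prop :=
  DenselyOrdered L ∧ NoMinOrder L ∧ NoMaxOrder L ∧
  (∀ S : Set L, S.Nonempty → BddAbove S → ∃ x, IsLUB S x) ∧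
  (∀ 𝒰 : Set (Set L), (∀ U ∈ 𝒰, IsOpen U ∧ U.Nonempty) →
    𝒰.Pairwise Disjoint → 𝒰.Countable) ∧
  ¬ TopologicalSpace.SeparableSpace L

open Set Classical

namespace SouslinDelta

theorem isCompact_Icc_of_lub {L : Type*} [LinearOrder L] [TopologicalSpace L] [OrderTopology L]
    (hmax : NoMaxOrder L)
    (hlub : ∀ S : Set L, S.Nonempty → BddAbove S → ∃ x, IsLUB S x) (a b : L) :
    IsCompact (Set.Icc a b) := by
  haveI := hmax
  letI sup : SupSet L :=
    ⟨fun S => if h : S.Nonempty ∧ BddAbove S then (hlub S h.1 h.2).choose else a⟩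
  have hsSup : ∀ S : Set L, (h : S.Nonempty ∧ BddAbove S) → sSup S = (hlub S h.1 h.2).choose := by
    intro S h
    show (if h : S.Nonempty ∧ BddAbove S then (hlub S h.1 h.2).choose else a) = _
    rw [dif_pos h]
  have hsSupN : ∀ S : Set L, ¬(S.Nonempty ∧ BddAbove S) → sSup S = a := by
    intro S h
    show (if h : S.Nonempty ∧ BddAbove S then (hlub S h.1 h.2).choose else a) = a
    rw [dif_neg h]
  have hsup : ∀ S : Set L, BddAbove S → S.Nonempty → IsLUB S (sSup S) := by
    intro S hb hn
    rw [hsSup S ⟨hn, hb⟩]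
    exact (hlub S hn hb).choose_spec
  letI ccl : ConditionallyCompleteLattice L := conditionallyCompleteLatticeOfLatticeOfsSup L hsup
  letI cclo : ConditionallyCompleteLinearOrder L :=
    { ccl, (inferInstance : LinearOrder L) with
      csSup_of_not_bddAbove := by
        intro s hs
        rw [hsSupN s (fun h => hs h.2), hsSupN ∅ (fun h => not_nonempty_empty h.1)]
      csInf_of_not_bddBelow := by
        intro s hs
        show sSup (lowerBounds s) = sSup (lowerBounds ∅)
        rw [lowerBounds_empty]
        have h1 : lowerBounds s = ∅ := not_nonempty_iff_eq_empty.1 hs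
        rw [h1, hsSupN ∅ (fun h => not_nonempty_empty h.1), hsSupN univ ?_]
        rintro ⟨-, ub, hub⟩
        obtain ⟨y, hy⟩ := exists_gt ub
        exact absurd (hub (mem_univ y)) (not_le.2 hy) }
  haveI hCI : CompactIccSpace L :=
    @ConditionallyCompleteLinearOrder.toCompactIccSpace L cclo _
      ⟨(‹OrderTopology L› : OrderTopology L).topology_eq_generate_intervals⟩
  exact isCompact_Icc


variable {L : Type*} [LinearOrder L]

section Scheme
variable [DenselyOrdered L]

noncomputable def pick (a c : L) (h : a < c) : L := (exists_between h).choose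

theorem pick_gt (a c : L) (h : a < c) : a < pick a c h := (exists_between h).choose_spec.1
theorem pick_lt (a c : L) (h : a < c) : pick a c h < c := (exists_between h).choose_spec.2

noncomputable def subPair (a c : L) (h : a < c) : Bool → L × L
  | false =>
    (pick a (pick a c h) (pick_gt a c h),
     pick (pick a (pick a c h) (pick_gt a c h)) (pick a c h)
       (pick_lt a (pick a c h) (pick_gt a c h)))
  | true =>
    (pick (pick a c h) c (pick_lt a c h),
     pick (pick (pick a c h) c (pick_lt a c h)) c
       (pick_lt (pick a c h) c (pick_lt a c h)))

theorem subPair_fst_lt_snd (a c : L) (h : a < c) (b : Bool) :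
    (subPair a c h b).1 < (subPair a c h b).2 := by
  cases b <;> simp only [subPair] <;> exact pick_gt _ _ _

theorem subPair_gt (a c : L) (h : a < c) (b : Bool) : a < (subPair a c h b).1 := by
  cases b <;> simp only [subPair]
  · exact pick_gt _ _ _
  · exact lt_trans (pick_gt a c h) (pick_gt _ _ _)

theorem subPair_lt' (a c : L) (h : a < c) (b : Bool) : (subPair a c h b).2 < c := by
  cases b <;> simp only [subPair]
  · exact lt_trans (pick_lt _ _ _) (pick_lt a c h)
  · exact pick_lt _ _ _

theorem subPair_gap (a c : L) (h : a < c) :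
    (subPair a c h false).2 < (subPair a c h true).1 := by
  simp only [subPair]
  exact lt_trans (pick_lt _ _ _) (pick_gt _ _ _)

noncomputable def scheme (x0 y0 : L) (h0 : x0 < y0) : List Bool → {p : L × L // p.1 < p.2}
  | [] => ⟨(x0, y0), h0⟩
  | b :: s =>
      ⟨subPair (scheme x0 y0 h0 s).1.1 (scheme x0 y0 h0 s).1.2 (scheme x0 y0 h0 s).2 b,
       subPair_fst_lt_snd _ _ _ b⟩

variable (x0 y0 : L) (h0 : x0 < y0)

noncomputable def A (s : List Bool) : L := (scheme x0 y0 h0 s).1.1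
noncomputable def B (s : List Bool) : L := (scheme x0 y0 h0 s).1.2

theorem A_nil : A x0 y0 h0 [] = x0 := rfl
theorem B_nil : B x0 y0 h0 [] = y0 := rfl

theorem A_lt_B (s : List Bool) : A x0 y0 h0 s < B x0 y0 h0 s := (scheme x0 y0 h0 s).2

theorem A_lt_A_cons (b : Bool) (s : List Bool) : A x0 y0 h0 s < A x0 y0 h0 (b :: s) :=
  subPair_gt _ _ (scheme x0 y0 h0 s).2 b

theorem B_cons_lt_B (b : Bool) (s : List Bool) : B x0 y0 h0 (b :: s) < B x0 y0 h0 s :=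
  subPair_lt' _ _ (scheme x0 y0 h0 s).2 b

theorem scheme_gap (s : List Bool) : B x0 y0 h0 (false :: s) < A x0 y0 h0 (true :: s) :=
  subPair_gap _ _ (scheme x0 y0 h0 s).2

theorem Icc_cons_subset (b : Bool) (s : List Bool) :
    Icc (A x0 y0 h0 (b :: s)) (B x0 y0 h0 (b :: s)) ⊆ Icc (A x0 y0 h0 s) (B x0 y0 h0 s) :=
  Icc_subset_Icc (A_lt_A_cons x0 y0 h0 b s).le (B_cons_lt_B x0 y0 h0 b s).le

theorem mem_Icc_unique : ∀ s t : List Bool, s.length = t.length → ∀ x : L,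
    x ∈ Icc (A x0 y0 h0 s) (B x0 y0 h0 s) → x ∈ Icc (A x0 y0 h0 t) (B x0 y0 h0 t) → s = t := by
  intro s
  induction s with
  | nil =>
    intro t hlen _ _ _
    cases t with
    | nil => rfl
    | cons c t => simp at hlen
  | cons b s ih =>
    intro t hlen x hxs hxt
    cases t with
    | nil => simp at hlen
    | cons c t =>
      have hst : s = t :=
        ih t (by simpa using hlen) x (Icc_cons_subset x0 y0 h0 b s hxs)
          (Icc_cons_subset x0 y0 h0 c t hxt)
      subst hst
      cases b <;> cases c
      · rfl
      · exact absurd ((hxs.2.trans_lt (scheme_gap x0 y0 h0 s)).trans_le hxt.1) (lt_irrefl x)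
      · exact absurd ((hxt.2.trans_lt (scheme_gap x0 y0 h0 s)).trans_le hxs.1) (lt_irrefl x)
      · rfl

end Scheme

noncomputable def pre (σ : ℕ → Bool) : ℕ → List Bool
  | 0 => []
  | n + 1 => σ n :: pre σ n

@[simp] theorem length_pre (σ : ℕ → Bool) : ∀ n, (pre σ n).length = n
  | 0 => rfl
  | n + 1 => by simp [pre, length_pre σ n]

theorem pre_congr {σ τ : ℕ → Bool} : ∀ n, (∀ k, k < n → σ k = τ k) → pre σ n = pre τ n
  | 0, _ => rfl
  | n + 1, h => by
      simp only [pre]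
      rw [h n (Nat.lt_succ_self n), pre_congr n (fun k hk => h k (Nat.lt_succ_of_lt hk))]

theorem exists_min_diff {σ τ : ℕ → Bool} (h : σ ≠ τ) :
    ∃ n, σ n ≠ τ n ∧ pre σ n = pre τ n := by
  have hex : ∃ n, σ n ≠ τ n := by
    by_contra hc
    push_neg at hc
    exact h (funext hc)
  refine ⟨Nat.find hex, Nat.find_spec hex, pre_congr _ fun k hk => ?_⟩
  by_contra hkne
  exact absurd (Nat.find_le hkne) (not_le.2 hk)

section Scheme2
variable [DenselyOrdered L] (x0 y0 : L) (h0 : x0 < y0)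

theorem A_pre_mono (σ : ℕ → Bool) : Monotone fun n => A x0 y0 h0 (pre σ n) :=
  monotone_nat_of_le_succ fun n => (A_lt_A_cons x0 y0 h0 (σ n) (pre σ n)).le

theorem B_pre_anti (σ : ℕ → Bool) : Antitone fun n => B x0 y0 h0 (pre σ n) :=
  antitone_nat_of_succ_le fun n => (B_cons_lt_B x0 y0 h0 (σ n) (pre σ n)).le

theorem A_pre_le_B_pre (σ : ℕ → Bool) (n m : ℕ) :
    A x0 y0 h0 (pre σ n) ≤ B x0 y0 h0 (pre σ m) := by
  calc A x0 y0 h0 (pre σ n) ≤ A x0 y0 h0 (pre σ (max n m)) :=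
        A_pre_mono x0 y0 h0 σ (le_max_left n m)
    _ ≤ B x0 y0 h0 (pre σ (max n m)) := (A_lt_B x0 y0 h0 _).le
    _ ≤ B x0 y0 h0 (pre σ m) := B_pre_anti x0 y0 h0 σ (le_max_right n m)

end Scheme2

noncomputable def gfun (e : ℕ → ℕ → Bool) : List Bool → List Bool
  | [] => []
  | b :: s => (!(e s.length (2 * s.length + 1))) :: b :: gfun e s

@[simp] theorem length_gfun (e : ℕ → ℕ → Bool) : ∀ s : List Bool, (gfun e s).length = 2 * s.length
  | [] => rfl
  | b :: s => by simp [gfun, length_gfun e s]; omega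

theorem gfun_inj (e : ℕ → ℕ → Bool) : ∀ s t : List Bool, gfun e s = gfun e t → s = t
  | [], [], _ => rfl
  | [], c :: t, h => by simp [gfun] at h
  | b :: s, [], h => by simp [gfun] at h
  | b :: s, c :: t, h => by
      simp only [gfun, List.cons.injEq] at h
      rw [h.2.1, gfun_inj e s t h.2.2]

noncomputable def Gfun (e : ℕ → ℕ → Bool) (σ : ℕ → Bool) : ℕ → Bool :=
  fun j => if j % 2 = 0 then σ (j / 2) else !(e (j / 2) j)

theorem Gfun_even (e : ℕ → ℕ → Bool) (σ : ℕ → Bool) (n : ℕ) : Gfun e σ (2 * n) = σ n := by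
  simp only [Gfun]
  rw [if_pos (by omega), Nat.mul_div_cancel_left n (by norm_num)]

theorem Gfun_odd (e : ℕ → ℕ → Bool) (σ : ℕ → Bool) (n : ℕ) :
    Gfun e σ (2 * n + 1) = !(e n (2 * n + 1)) := by
  simp only [Gfun]
  rw [if_neg (by omega), show (2 * n + 1) / 2 = n by omega]

theorem Gfun_ne (e : ℕ → ℕ → Bool) {σ τ : ℕ → Bool} (h : σ ≠ τ) : Gfun e σ ≠ Gfun e τ := by
  intro hc
  refine h (funext fun n => ?_)
  have := congrFun hc (2 * n)
  rwa [Gfun_even, Gfun_even] at this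

theorem pre_Gfun (e : ℕ → ℕ → Bool) (σ : ℕ → Bool) :
    ∀ n, pre (Gfun e σ) (2 * n) = gfun e (pre σ n)
  | 0 => rfl
  | n + 1 => by
      have h2 : 2 * (n + 1) = (2 * n) + 1 + 1 := by omega
      rw [h2]
      show Gfun e σ (2 * n + 1) :: Gfun e σ (2 * n) :: pre (Gfun e σ) (2 * n)
          = gfun e (σ n :: pre σ n)
      rw [Gfun_odd, Gfun_even, pre_Gfun e σ n]
      simp [gfun, length_pre]

theorem isGLB_of_isLUB_lowerBounds {S : Set L} {x : L} (hx : IsLUB (lowerBounds S) x) :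
    IsGLB S x :=
  ⟨fun s hs => hx.2 fun _ hz => hz hs, fun _ hz => hx.1 hz⟩

theorem finite_len (n : ℕ) : {s : List Bool | s.length = n}.Finite := by
  induction n with
  | zero =>
    refine (Set.finite_singleton ([] : List Bool)).subset fun s hs => ?_
    simp only [mem_setOf_eq, List.length_eq_zero_iff] at hs
    simp [hs]
  | succ n ih =>
    have hsub : {s : List Bool | s.length = n + 1} ⊆
        (fun p : Bool × List Bool => p.1 :: p.2) '' (univ ×ˢ {s | s.length = n}) := by
      intro s hs
      cases s with
      | nil => simp at hs
      | cons b t => exact ⟨(b, t), ⟨trivial, by simpa using hs⟩, rfl⟩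
    exact ((finite_univ.prod ih).image _).subset hsub

theorem souslin_not_delta_aux {L : Type*} [LinearOrder L] [TopologicalSpace L] [OrderTopology L]
    (hcompact : ∀ a b : L, IsCompact (Set.Icc a b))
    (hdense : DenselyOrdered L) (hmin : NoMinOrder L) (hmax : NoMaxOrder L)
    (hlub : ∀ S : Set L, S.Nonempty → BddAbove S → ∃ x, IsLUB S x)
    (hccc : ∀ 𝒰 : Set (Set L), (∀ U ∈ 𝒰, IsOpen U ∧ U.Nonempty) →
      𝒰.Pairwise Disjoint → 𝒰.Countable)
    (x0 y0 : L) (h0 : x0 < y0) : ¬ IsDeltaSpace L := by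
  haveI := hdense; haveI := hmin; haveI := hmax
  intro hDelta
  -- least upper bounds along branches
  have hbddA : ∀ ρ : ℕ → Bool, BddAbove (range fun n => A x0 y0 h0 (pre ρ n)) := by
    intro ρ
    refine ⟨B x0 y0 h0 (pre ρ 0), ?_⟩
    rintro _ ⟨n, rfl⟩
    exact A_pre_le_B_pre x0 y0 h0 ρ n 0
  choose u hu using fun ρ : ℕ → Bool =>
    hlub _ ⟨_, mem_range_self 0⟩ (hbddA ρ)
  have hlbB : ∀ ρ : ℕ → Bool,
      (lowerBounds (range fun n => B x0 y0 h0 (pre ρ n))).Nonempty := by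
    intro ρ
    refine ⟨A x0 y0 h0 (pre ρ 0), ?_⟩
    rintro _ ⟨n, rfl⟩
    exact A_pre_le_B_pre x0 y0 h0 ρ 0 n
  have hbddLB : ∀ ρ : ℕ → Bool,
      BddAbove (lowerBounds (range fun n => B x0 y0 h0 (pre ρ n))) := by
    intro ρ
    exact ⟨B x0 y0 h0 (pre ρ 0), fun z hz => hz (mem_range_self 0)⟩
  choose v hv0 using fun ρ : ℕ → Bool => hlub _ (hlbB ρ) (hbddLB ρ)
  have hv : ∀ ρ : ℕ → Bool, IsGLB (range fun n => B x0 y0 h0 (pre ρ n)) (v ρ) :=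
    fun ρ => isGLB_of_isLUB_lowerBounds (hv0 ρ)
  have hAu : ∀ (ρ : ℕ → Bool) n, A x0 y0 h0 (pre ρ n) ≤ u ρ :=
    fun ρ n => (hu ρ).1 (mem_range_self n)
  have huB : ∀ (ρ : ℕ → Bool) n, u ρ ≤ B x0 y0 h0 (pre ρ n) := by
    intro ρ n
    refine (hu ρ).2 ?_
    rintro _ ⟨m, rfl⟩
    exact A_pre_le_B_pre x0 y0 h0 ρ m n
  have hAv : ∀ (ρ : ℕ → Bool) n, A x0 y0 h0 (pre ρ n) ≤ v ρ := by
    intro ρ n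
    refine (hv ρ).2 ?_
    rintro _ ⟨m, rfl⟩
    exact A_pre_le_B_pre x0 y0 h0 ρ n m
  have hvB : ∀ (ρ : ℕ → Bool) n, v ρ ≤ B x0 y0 h0 (pre ρ n) :=
    fun ρ n => (hv ρ).1 (mem_range_self n)
  have huv : ∀ ρ : ℕ → Bool, u ρ ≤ v ρ := by
    intro ρ
    refine (hu ρ).2 ?_
    rintro _ ⟨m, rfl⟩
    exact hAv ρ m
  have huIcc : ∀ (ρ : ℕ → Bool) n,
      u ρ ∈ Icc (A x0 y0 h0 (pre ρ n)) (B x0 y0 h0 (pre ρ n)) :=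
    fun ρ n => ⟨hAu ρ n, huB ρ n⟩
  -- distinct branches cannot share a common point of all their interval closures
  have hkey : ∀ ρ ρ' : ℕ → Bool, ρ ≠ ρ' → ∀ w : L,
      (∀ n, w ∈ Icc (A x0 y0 h0 (pre ρ n)) (B x0 y0 h0 (pre ρ n))) →
      (∀ n, w ∈ Icc (A x0 y0 h0 (pre ρ' n)) (B x0 y0 h0 (pre ρ' n))) → False := by
    intro ρ ρ' hne w h1 h2
    obtain ⟨n, hdn, hdp⟩ := exists_min_diff hne
    have heq := mem_Icc_unique x0 y0 h0 (pre ρ (n + 1)) (pre ρ' (n + 1))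
      (by simp) w (h1 (n + 1)) (h2 (n + 1))
    simp only [pre, hdp, List.cons.injEq] at heq
    exact hdn heq.1
  -- the fat branches form a countable set
  set C : Set (ℕ → Bool) := {ρ | u ρ < v ρ} with hCdef
  have hCcount : C.Countable := by
    have hIccmem : ∀ ρ ∈ C, ∀ w ∈ Ioo (u ρ) (v ρ), ∀ n,
        w ∈ Icc (A x0 y0 h0 (pre ρ n)) (B x0 y0 h0 (pre ρ n)) := by
      intro ρ _ w hw n
      exact ⟨(hAu ρ n).trans hw.1.le, hw.2.le.trans (hvB ρ n)⟩
    have hU : ((fun ρ => Ioo (u ρ) (v ρ)) '' C).Countable := by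
      refine hccc _ ?_ ?_
      · rintro _ ⟨ρ, hρ, rfl⟩
        exact ⟨isOpen_Ioo, nonempty_Ioo.2 hρ⟩
      · rintro _ ⟨ρ, hρ, rfl⟩ _ ⟨ρ', hρ', rfl⟩ hne
        have hρρ' : ρ ≠ ρ' := fun h => hne (by rw [h])
        refine Set.disjoint_left.2 fun w hwρ hwρ' => ?_
        exact hkey ρ ρ' hρρ' w (fun n => hIccmem ρ hρ w hwρ n)
          (fun n => hIccmem ρ' hρ' w hwρ' n)
    refine (mapsTo_image (fun ρ => Ioo (u ρ) (v ρ)) C).countable_of_injOn ?_ hU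
    intro ρ hρ ρ' hρ' heq
    by_contra hne
    obtain ⟨w, hw⟩ : (Ioo (u ρ) (v ρ)).Nonempty := nonempty_Ioo.2 hρ
    have hw' : w ∈ Ioo (u ρ') (v ρ') := by
      have heq' : Ioo (u ρ) (v ρ) = Ioo (u ρ') (v ρ') := heq
      rw [← heq']
      exact hw
    exact hkey ρ ρ' hne w (fun n => hIccmem ρ hρ w hw n) (fun n => hIccmem ρ' hρ' w hw' n)
  have hCsub : ∃ e : ℕ → (ℕ → Bool), C ⊆ range e := by
    rcases C.eq_empty_or_nonempty with h | h
    · exact ⟨fun _ _ => false, by simp [h]⟩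
    · obtain ⟨e, he⟩ := hCcount.exists_eq_range h
      exact ⟨e, he.subset⟩
  obtain ⟨e, he⟩ := hCsub
  -- all branches through the thinned tree are degenerate
  have hdeg : ∀ σ : ℕ → Bool, u (Gfun e σ) = v (Gfun e σ) := by
    intro σ
    refine le_antisymm (huv _) (not_lt.1 fun hfat => ?_)
    obtain ⟨k, hk⟩ := he (show Gfun e σ ∈ C from hfat)
    have h1 : Gfun e σ (2 * k + 1) = !(e k (2 * k + 1)) := Gfun_odd e σ k
    rw [← hk] at h1
    simp at h1
  -- the Cantor-like compact set
  set Z : Set L := ⋂ n, ⋃ s ∈ {s : List Bool | s.length = n},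
      Icc (A x0 y0 h0 (gfun e s)) (B x0 y0 h0 (gfun e s)) with hZdef
  have hptZ : ∀ σ : ℕ → Bool, u (Gfun e σ) ∈ Z := by
    intro σ
    refine mem_iInter.2 fun n => ?_
    refine mem_biUnion (show (pre σ n) ∈ {s : List Bool | s.length = n} by simp) ?_
    rw [← pre_Gfun]
    exact huIcc (Gfun e σ) (2 * n)
  have hZsub : Z ⊆ Icc x0 y0 := by
    intro z hz
    have h1 := mem_iInter.1 hz 0
    simp only [mem_iUnion] at h1
    obtain ⟨s, hs, hmem⟩ := h1
    have hnil : s = [] := List.length_eq_zero_iff.1 hs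
    subst hnil
    simpa [gfun, A_nil, B_nil] using hmem
  have hZclosed : IsClosed Z :=
    isClosed_iInter fun n => (finite_len n).isClosed_biUnion fun s _ => isClosed_Icc
  have hZcpt : IsCompact Z := (hcompact x0 y0).of_isClosed_subset hZclosed hZsub
  -- every point of Z is a branch point
  have hstep : ∀ z ∈ Z, ∀ s : List Bool,
      z ∈ Icc (A x0 y0 h0 (gfun e s)) (B x0 y0 h0 (gfun e s)) →
      ∃ b : Bool, z ∈ Icc (A x0 y0 h0 (gfun e (b :: s))) (B x0 y0 h0 (gfun e (b :: s))) := by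
    intro z hz s hzs
    have h1 := mem_iInter.1 hz (s.length + 1)
    simp only [mem_iUnion] at h1
    obtain ⟨t, ht, hzt⟩ := h1
    cases t with
    | nil => simp at ht
    | cons c t' =>
      have hlen : t'.length = s.length := by simpa using ht
      have hzt' : z ∈ Icc (A x0 y0 h0 (gfun e t')) (B x0 y0 h0 (gfun e t')) := by
        have hsub1 := Icc_cons_subset x0 y0 h0 (!(e t'.length (2 * t'.length + 1))) (c :: gfun e t')
        have hsub2 := Icc_cons_subset x0 y0 h0 c (gfun e t')
        exact hsub2 (hsub1 hzt)
      have hgg : gfun e t' = gfun e s :=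
        mem_Icc_unique x0 y0 h0 _ _ (by simp [hlen]) z hzt' hzs
      have hts : t' = s := gfun_inj e _ _ hgg
      subst hts
      exact ⟨c, hzt⟩
  have hZpt : ∀ z ∈ Z, ∃ σ : ℕ → Bool, z = u (Gfun e σ) := by
    intro z hz
    have hbase : z ∈ Icc (A x0 y0 h0 (gfun e [])) (B x0 y0 h0 (gfun e [])) := by
      have := hZsub hz
      simpa [gfun, A_nil, B_nil] using this
    let ch : ℕ → {s : List Bool // z ∈ Icc (A x0 y0 h0 (gfun e s)) (B x0 y0 h0 (gfun e s))} :=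
      fun n => Nat.rec ⟨[], hbase⟩
        (fun _ p => ⟨(hstep z hz p.1 p.2).choose :: p.1, (hstep z hz p.1 p.2).choose_spec⟩) n
    let σ : ℕ → Bool := fun n => ((ch (n + 1)).1).headI
    have hch : ∀ n, pre σ n = (ch n).1 := by
      intro n
      induction n with
      | zero => rfl
      | succ n ih =>
        have hsucc : (ch (n + 1)).1 = (hstep z hz (ch n).1 (ch n).2).choose :: (ch n).1 := rfl
        show σ n :: pre σ n = (ch (n + 1)).1
        rw [ih, hsucc]
        rfl
    have hzb : ∀ m, A x0 y0 h0 (pre (Gfun e σ) m) ≤ z ∧ z ≤ B x0 y0 h0 (pre (Gfun e σ) m) := by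
      intro m
      have h2m : z ∈ Icc (A x0 y0 h0 (pre (Gfun e σ) (2 * m))) (B x0 y0 h0 (pre (Gfun e σ) (2 * m))) := by
        rw [pre_Gfun, hch m]
        exact (ch m).2
      constructor
      · exact le_trans (A_pre_mono x0 y0 h0 (Gfun e σ) (by omega : m ≤ 2 * m)) h2m.1
      · exact le_trans h2m.2 (B_pre_anti x0 y0 h0 (Gfun e σ) (by omega : m ≤ 2 * m))
    have h1 : u (Gfun e σ) ≤ z := by
      refine (hu _).2 ?_
      rintro _ ⟨m, rfl⟩
      exact (hzb m).1
    have h2 : z ≤ v (Gfun e σ) := by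
      refine (hv _).2 ?_
      rintro _ ⟨m, rfl⟩
      exact (hzb m).2
    exact ⟨σ, le_antisymm (h2.trans (hdeg σ).ge) h1⟩
  -- neighbourhood capture
  have hcapture : ∀ (σ : ℕ → Bool) (l r : L), l < u (Gfun e σ) → u (Gfun e σ) < r →
      ∃ n, Icc (A x0 y0 h0 (gfun e (pre σ n))) (B x0 y0 h0 (gfun e (pre σ n))) ⊆ Ioo l r := by
    intro σ l r hl hr
    have h1 : ∃ k1, l < A x0 y0 h0 (pre (Gfun e σ) k1) := by
      by_contra h
      push_neg at h
      have : u (Gfun e σ) ≤ l := by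
        refine (hu _).2 ?_
        rintro _ ⟨m, rfl⟩
        exact h m
      exact absurd hl (not_lt.2 this)
    have h2 : ∃ k2, B x0 y0 h0 (pre (Gfun e σ) k2) < r := by
      by_contra h
      push_neg at h
      have hrv : r ≤ v (Gfun e σ) := by
        refine (hv _).2 ?_
        rintro _ ⟨m, rfl⟩
        exact h m
      rw [← hdeg σ] at hrv
      exact absurd hr (not_lt.2 hrv)
    obtain ⟨k1, hk1⟩ := h1
    obtain ⟨k2, hk2⟩ := h2
    refine ⟨max k1 k2, fun x hx => ?_⟩
    rw [← pre_Gfun] at hx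
    constructor
    · exact hk1.trans_le ((A_pre_mono x0 y0 h0 (Gfun e σ)
        (by omega : k1 ≤ 2 * max k1 k2)).trans hx.1)
    · exact lt_of_le_of_lt (hx.2.trans (B_pre_anti x0 y0 h0 (Gfun e σ)
        (by omega : k2 ≤ 2 * max k1 k2))) hk2
  -- branch points are injective
  have hptinj : ∀ σ τ : ℕ → Bool, σ ≠ τ → u (Gfun e σ) ≠ u (Gfun e τ) := by
    intro σ τ hne hequ
    refine hkey (Gfun e σ) (Gfun e τ) (Gfun_ne e hne) (u (Gfun e σ))
      (fun n => huIcc _ n) (fun n => ?_)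
    rw [hequ]
    exact huIcc _ n
  -- the countable dense set
  set EF : Set (ℕ → Bool) := {σ | ∃ n, ∀ k, n ≤ k → σ k = false} with hEFdef
  have hEFc : EF.Countable := by
    have hEq : EF = ⋃ n, {σ : ℕ → Bool | ∀ k, n ≤ k → σ k = false} := by
      ext σ; simp [hEFdef]
    rw [hEq]
    refine countable_iUnion fun n => Set.Finite.countable ?_
    refine Set.Finite.of_finite_image (f := fun σ => (fun i : Fin n => σ i))
      (Set.finite_univ.subset (subset_univ _)) ?_
    intro σ hσ τ hτ h
    funext k
    rcases lt_or_ge k n with hk | hk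
    · exact congrFun h ⟨k, hk⟩
    · rw [hσ k hk, hτ k hk]
  set Q : Set L := (fun σ => u (Gfun e σ)) '' EF with hQdef
  have hQc : Q.Countable := hEFc.image _
  have hQne : Q.Nonempty := ⟨u (Gfun e fun _ => false), ⟨fun _ => false, ⟨0, fun _ _ => rfl⟩, rfl⟩⟩
  obtain ⟨q, hq⟩ := hQc.exists_eq_range hQne
  set D : ℕ → Set L := fun k => Q \ (q '' Iio k) with hDdef
  have hDdec : ∀ k, D (k + 1) ⊆ D k :=
    fun k => diff_subset_diff_right (image_mono (Iio_subset_Iio (by omega)))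
  have hDempty : (⋂ k, D k) = ∅ := by
    ext x
    simp only [mem_iInter, mem_empty_iff_false, iff_false]
    intro h
    have hx : x ∈ Q := (h 0).1
    rw [hq] at hx
    obtain ⟨i, rfl⟩ := hx
    exact (h (i + 1)).2 ⟨i, by simp, rfl⟩
  obtain ⟨V, hVo, hVdec, hVsub, hVempty⟩ := hDelta D hDdec hDempty
  have hQZ : Q ⊆ Z := by
    rintro _ ⟨σ, -, rfl⟩
    exact hptZ σ
  -- density of D k near any point of Z
  have hmeet : ∀ (k : ℕ) (U : Set L), IsOpen U → ∀ z, z ∈ Z → z ∈ U →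
      ∃ y, y ∈ D k ∧ y ∈ U := by
    intro k U hU z hzZ hzU
    obtain ⟨σ, rfl⟩ := hZpt z hzZ
    obtain ⟨l, r, hlr, hsubU⟩ := (mem_nhds_iff_exists_Ioo_subset).1 (hU.mem_nhds hzU)
    obtain ⟨n, hn⟩ := hcapture σ l r hlr.1 hlr.2
    set τ : ℕ → (ℕ → Bool) := fun m j => if j < n then σ j else decide (j = n + m) with hτdef
    have hτEF : ∀ m, τ m ∈ EF := by
      intro m
      refine ⟨n + m + 1, fun j hj => ?_⟩
      simp only [hτdef]
      rw [if_neg (by omega)]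
      simp only [decide_eq_false_iff_not]
      omega
    have hτpre : ∀ m, pre (τ m) n = pre σ n :=
      fun m => pre_congr n fun j hj => by simp [hτdef, if_pos hj]
    have hτmem : ∀ m, u (Gfun e (τ m)) ∈ Ioo l r := by
      intro m
      apply hn
      rw [← hτpre m, ← pre_Gfun]
      exact huIcc _ _
    have hτne : ∀ m m', m ≠ m' → τ m ≠ τ m' := by
      intro m m' hmm heq
      have h1 := congrFun heq (n + m)
      simp only [hτdef] at h1
      rw [if_neg (by omega), if_neg (by omega)] at h1
      simp only [decide_eq_decide] at h1
      have h2 : n + m = n + m' := h1.mp (by simp)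
      omega
    by_contra hcon
    push_neg at hcon
    have hin : ∀ m, u (Gfun e (τ m)) ∈ q '' Iio k := by
      intro m
      by_contra hnot
      exact hcon (u (Gfun e (τ m))) ⟨⟨τ m, hτEF m, rfl⟩, hnot⟩ (hsubU (hτmem m))
    have hinj2 : Set.InjOn (fun m => u (Gfun e (τ m))) ↑(Finset.range (k + 1)) := by
      intro m _ m' _ h
      by_contra hne2
      exact hptinj _ _ (hτne m m' hne2) h
    have hcard : (Finset.range (k + 1)).card ≤ (Finset.range k).card := by
      calc (Finset.range (k + 1)).card
          = ((Finset.range (k + 1)).image fun m => u (Gfun e (τ m))).card :=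
            (Finset.card_image_of_injOn hinj2).symm
        _ ≤ ((Finset.range k).image q).card := by
            refine Finset.card_le_card ?_
            intro y hy
            simp only [Finset.mem_image, Finset.mem_range] at hy ⊢
            obtain ⟨m, _, rfl⟩ := hy
            obtain ⟨i, hi, hqi⟩ := hin m
            exact ⟨i, hi, hqi⟩
        _ ≤ (Finset.range k).card := Finset.card_image_le
    simp at hcard
  -- Baire category on Z
  haveI : CompactSpace Z := isCompact_iff_compactSpace.1 hZcpt
  have hZne : Z.Nonempty := ⟨u (Gfun e fun _ => false), hptZ _⟩
  haveI : Nonempty Z := hZne.to_subtype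
  have hWo : ∀ k, IsOpen ((fun x : Z => (x : L)) ⁻¹' V k) :=
    fun k => (hVo k).preimage continuous_subtype_val
  have hWd : ∀ k, Dense ((fun x : Z => (x : L)) ⁻¹' V k) := by
    intro k
    rw [dense_iff_inter_open]
    rintro W hW hWne
    obtain ⟨U, hU, rfl⟩ := isOpen_induced_iff.1 hW
    obtain ⟨⟨z, hzZ⟩, hzU⟩ := hWne
    obtain ⟨y, hyD, hyU⟩ := hmeet k U hU z hzZ hzU
    exact ⟨⟨y, hQZ hyD.1⟩, hyU, hVsub k hyD⟩
  have hbig := dense_iInter_of_isOpen hWo hWd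
  obtain ⟨⟨w, hwZ⟩, hw⟩ := hbig.nonempty
  have hwV : w ∈ ⋂ k, V k := by
    refine mem_iInter.2 fun k => ?_
    exact mem_iInter.1 hw k
  rw [hVempty] at hwV
  exact hwV


theorem souslin_not_delta {L : Type*} [LinearOrder L] [TopologicalSpace L] [OrderTopology L]
    (hS : IsSouslinLine L) : ¬ IsDeltaSpace L := by
  obtain ⟨hdense, hmin, hmax, hlub, hccc, hsep⟩ := hS
  haveI := hdense; haveI := hmin; haveI := hmax
  have hne : Nonempty L := by
    by_contra h
    rw [not_nonempty_iff] at h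
    exact hsep ⟨⟨∅, countable_empty, fun x => (h.false x).elim⟩⟩
  obtain ⟨x0⟩ := hne
  obtain ⟨y0, h0⟩ := exists_gt x0
  exact souslin_not_delta_aux (isCompact_Icc_of_lub hmax hlub) hdense hmin hmax hlub hccc x0 y0 h0

theorem delta_subtype {X : Type*} [TopologicalSpace X] (hX : IsDeltaSpace X) (S : Set X) :
    IsDeltaSpace S := by
  intro D hdec hempty
  have hD'dec : ∀ n, (Subtype.val '' D (n + 1)) ⊆ (Subtype.val '' D n) :=
    fun n => image_mono (hdec n)
  have hD'empty : (⋂ n, (Subtype.val '' D n)) = ∅ := by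
    ext x
    simp only [mem_iInter, mem_empty_iff_false, iff_false]
    intro h
    obtain ⟨d0, hd0, hval0⟩ := h 0
    have hmem : d0 ∈ ⋂ n, D n := by
      refine mem_iInter.2 fun n => ?_
      obtain ⟨d, hd, hval⟩ := h n
      have : d = d0 := Subtype.val_injective (hval.trans hval0.symm)
      rwa [← this]
    rw [hempty] at hmem
    exact hmem
  obtain ⟨V, hVo, hVdec, hVsub, hVempty⟩ := hX _ hD'dec hD'empty
  refine ⟨fun n => Subtype.val ⁻¹' V n, fun n => (hVo n).preimage continuous_subtype_val,
    fun n => preimage_mono (hVdec n), fun n d hd => hVsub n ⟨d, hd, rfl⟩, ?_⟩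
  ext z
  simp only [mem_iInter, mem_preimage, mem_empty_iff_false, iff_false]
  intro h
  have : (z : X) ∈ ⋂ n, V n := mem_iInter.2 h
  rw [hVempty] at this
  exact this

theorem delta_of_homeomorph {X Y : Type*} [TopologicalSpace X] [TopologicalSpace Y]
    (f : X ≃ₜ Y) (hX : IsDeltaSpace X) : IsDeltaSpace Y := by
  intro D hdec hempty
  have h1 : (⋂ n, f ⁻¹' D n) = ∅ := by
    ext x
    simp only [mem_iInter, mem_preimage, mem_empty_iff_false, iff_false]
    intro h
    have : f x ∈ ⋂ n, D n := mem_iInter.2 h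
    rw [hempty] at this
    exact this
  obtain ⟨V, hVo, hVdec, hVsub, hVempty⟩ := hX (fun n => f ⁻¹' D n)
    (fun n => preimage_mono (hdec n)) h1
  refine ⟨fun n => f.symm ⁻¹' V n, fun n => (hVo n).preimage f.symm.continuous,
    fun n => preimage_mono (hVdec n), fun n y hy => ?_, ?_⟩
  · have : f (f.symm y) ∈ D n := by rwa [f.apply_symm_apply]
    exact hVsub n this
  · ext y
    simp only [mem_iInter, mem_preimage, mem_empty_iff_false, iff_false]
    intro h
    have : f.symm y ∈ ⋂ n, V n := mem_iInter.2 h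
    rw [hVempty] at this
    exact this

end SouslinDelta

/-- A locally compact, (countably) compact Δ-space contains no subspace
homeomorphic to a Souslin line; in particular a Souslin line (being a Baire
space partitioned into countably many dense subsets) is never a Δ-space. -/
theorem delta_space_has_no_souslin_line_subspace {X : Type u}
    [TopologicalSpace X] [LocallyCompactSpace X]
    (hcc : CompactSpace X ∨
      ∀ U : ℕ → Set X, (∀ n, IsOpen (U n)) → (⋃ n, U n) = Set.univ →
        ∃ F : Finset ℕ, (⋃ n ∈ F, U n) = Set.univ)
    (hX : IsDeltaSpace X) :
    (∀ S : Set X, ∀ (L : Type v) [LinearOrder L] [TopologicalSpace L]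
        [OrderTopology L], IsSouslinLine L → IsEmpty (S ≃ₜ L)) ∧
    (∀ (L : Type v) [LinearOrder L] [TopologicalSpace L] [OrderTopology L],
        IsSouslinLine L → ¬ IsDeltaSpace L) := by
  constructor
  · intro S L _ _ _ hS
    exact ⟨fun f => SouslinDelta.souslin_not_delta hS
      (SouslinDelta.delta_of_homeomorph f (SouslinDelta.delta_subtype hX S))⟩
  · intro L _ _ _ hS
    exact SouslinDelta.souslin_not_delta hS
end

section
/- If a ladder system L on lim(ω₁) is ω-uniformizable — i.e., for every sequence of functions η_α : s_α → ω there is f : ω₁ → ω with f↾s_α =* η_α for all α — then the ladder system space X_L is σ-closed discrete, hence a Q-space. -/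
/-- The points of `ω₁`, as a type. -/
def Omega1 : Type 1 := {o : Ordinal // o < omega1}

/-- The countable limit ordinals, as a type. -/
def LimOmega1 : Type 1 := {o : Ordinal // o < omega1 ∧ Order.IsSuccLimit o}

/-- The ladder system space `X_L` for a ladder system `s`: its underlying set is
`ω₁ × {0} ∪ lim(ω₁) × {1}`, the points of `ω₁` are isolated, and basic
neighborhoods of a limit `α` consist of `α` together with a cofinite subset of
the ladder `s α`. -/
def ladderTopology (s : LimOmega1 → ℕ → Omega1) :
    TopologicalSpace (Omega1 ⊕ LimOmega1) :=
  TopologicalSpace.generateFrom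
    ({U | ∃ β : Omega1, U = {Sum.inl β}} ∪
     {U | ∃ (α : LimOmega1) (m : ℕ),
        U = insert (Sum.inr α) (Sum.inl '' (s α '' {n | m ≤ n}))})

/-- The generating family of the ladder topology. -/
def ladderGens (s : LimOmega1 → ℕ → Omega1) : Set (Set (Omega1 ⊕ LimOmega1)) :=
  ({U | ∃ β : Omega1, U = {Sum.inl β}} ∪
     {U | ∃ (α : LimOmega1) (m : ℕ),
        U = insert (Sum.inr α) (Sum.inl '' (s α '' {n | m ≤ n}))})

lemma ladder_open_of_basic (s : LimOmega1 → ℕ → Omega1)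
    (C : Set (Omega1 ⊕ LimOmega1))
    (h : ∀ x ∈ C, ∃ B ∈ ladderGens s, x ∈ B ∧ B ⊆ C) :
    @IsOpen _ (ladderTopology s) C := by
  have hC : C = ⋃₀ {B | B ∈ ladderGens s ∧ B ⊆ C} := by
    ext x
    constructor
    · intro hx
      obtain ⟨B, hB, hxB, hBC⟩ := h x hx
      exact ⟨B, ⟨hB, hBC⟩, hxB⟩
    · rintro ⟨B, ⟨_, hBC⟩, hxB⟩
      exact hBC hxB
  rw [hC]
  exact TopologicalSpace.GenerateOpen.sUnion _
    (fun B hB => TopologicalSpace.GenerateOpen.basic _ hB.1)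

/-- If a ladder system is ω-uniformizable — every sequence of functions
`η_α : s_α → ω` admits `f : ω₁ → ω` with `f ∘ s_α =* η_α` for all `α` — then
the ladder system space `X_L` is σ-closed discrete, hence a Q-space. -/
theorem omega_uniformizable_sigma_closed_discrete
    (s : LimOmega1 → ℕ → Omega1)
    (hmono : ∀ α : LimOmega1, StrictMono fun n => (s α n).1)
    (hlt : ∀ (α : LimOmega1) (n : ℕ), (s α n).1 < α.1)
    (hcof : ∀ α : LimOmega1, ∀ β < α.1, ∃ n, β < (s α n).1)
    (hunif : ∀ η : LimOmega1 → ℕ → ℕ, ∃ f : Omega1 → ℕ,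
      ∀ α : LimOmega1, {n : ℕ | f (s α n) ≠ η α n}.Finite) :
    (∃ Dn : ℕ → Set (Omega1 ⊕ LimOmega1),
        (⋃ n, Dn n) = Set.univ ∧
        (∀ n, @IsClosed _ (ladderTopology s) (Dn n)) ∧
        (∀ n, ∀ x ∈ Dn n, ∃ U, @IsOpen _ (ladderTopology s) U ∧ U ∩ Dn n = {x})) ∧
      (∀ A : Set (Omega1 ⊕ LimOmega1), @IsGδ _ (ladderTopology s) A) := by
  obtain ⟨f, hf⟩ := hunif (fun _ n => n)
  letI : TopologicalSpace (Omega1 ⊕ LimOmega1) := ladderTopology s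
  -- the σ-closed-discrete decomposition
  set Dn : ℕ → Set (Omega1 ⊕ LimOmega1) :=
    fun n => Sum.inl '' (f ⁻¹' {n}) ∪ Set.range Sum.inr with hDn
  -- for each limit α and each n, a tail of the ladder avoids `f ⁻¹' {n}`
  have key : ∀ (α : LimOmega1) (n : ℕ), ∃ m, n < m ∧ ∀ k, m ≤ k → f (s α k) ≠ n := by
    intro α n
    obtain ⟨N, hN⟩ := (hf α).bddAbove
    refine ⟨max (n + 1) (N + 1), lt_of_lt_of_le (Nat.lt_succ_self n) (le_max_left _ _), fun k hk hfk => ?_⟩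
    have hk1 : n + 1 ≤ k := le_trans (le_max_left _ _) hk
    have hk2 : N + 1 ≤ k := le_trans (le_max_right _ _) hk
    by_cases hmem : f (s α k) = k
    · omega
    · have := hN hmem
      omega
  -- the basic neighborhoods of limit points are in the generating set
  have basicInr : ∀ (α : LimOmega1) (m : ℕ),
      insert (Sum.inr α) (Sum.inl '' (s α '' {n | m ≤ n})) ∈ ladderGens s :=
    fun α m => Or.inr ⟨α, m, rfl⟩
  have basicInl : ∀ β : Omega1, ({Sum.inl β} : Set (Omega1 ⊕ LimOmega1)) ∈ ladderGens s :=
    fun β => Or.inl ⟨β, rfl⟩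
  have singOpen : ∀ β : Omega1, @IsOpen _ (ladderTopology s) ({Sum.inl β} : Set _) :=
    fun β => TopologicalSpace.GenerateOpen.basic _ (basicInl β)
  -- each (E ∩ Dn n) is closed for arbitrary E (closed discrete ⇒ all subsets closed)
  have hclosed : ∀ (E : Set (Omega1 ⊕ LimOmega1)) (n : ℕ),
      @IsClosed _ (ladderTopology s) (E ∩ Dn n) := by
    intro E n
    constructor
    apply ladder_open_of_basic
    rintro (β | α) hx
    · refine ⟨{Sum.inl β}, basicInl β, rfl, ?_⟩
      rintro y rfl
      exact hx
    · obtain ⟨m, hnm, hm⟩ := key α n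
      refine ⟨_, basicInr α m, Set.mem_insert _ _, ?_⟩
      rintro y hy
      rcases hy with rfl | ⟨_, ⟨k, hk, rfl⟩, rfl⟩
      · exact hx
      · rintro ⟨_, hD⟩
        rcases hD with ⟨γ, hγ, hγe⟩ | ⟨δ, hδ⟩
        · rw [Sum.inl.injEq] at hγe
          subst hγe
          exact hm k hk hγ
        · exact Sum.inr_ne_inl hδ
  refine ⟨⟨Dn, ?_, ?_, ?_⟩, ?_⟩
  · -- cover
    ext x
    simp only [Set.mem_iUnion, Set.mem_univ, iff_true]
    cases x with
    | inl β => exact ⟨f β, Or.inl ⟨β, rfl, rfl⟩⟩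
    | inr α => exact ⟨0, Or.inr ⟨α, rfl⟩⟩
  · -- closed
    intro n
    have := hclosed Set.univ n
    rwa [Set.univ_inter] at this
  · -- discrete
    rintro n (β | α) hx
    · refine ⟨{Sum.inl β}, singOpen β, ?_⟩
      apply Set.eq_singleton_iff_unique_mem.2
      exact ⟨⟨rfl, hx⟩, fun y hy => hy.1⟩
    · obtain ⟨m, hnm, hm⟩ := key α n
      refine ⟨insert (Sum.inr α) (Sum.inl '' (s α '' {k | m ≤ k})),
        TopologicalSpace.GenerateOpen.basic _ (basicInr α m), ?_⟩
      apply Set.eq_singleton_iff_unique_mem.2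
      refine ⟨⟨Set.mem_insert _ _, hx⟩, ?_⟩
      rintro y ⟨hyU, hyD⟩
      rcases hyU with rfl | ⟨_, ⟨k, hk, rfl⟩, rfl⟩
      · rfl
      · exfalso
        rcases hyD with ⟨γ, hγ, hγe⟩ | ⟨δ, hδ⟩
        · rw [Sum.inl.injEq] at hγe
          subst hγe
          exact hm k hk hγ
        · exact Sum.inr_ne_inl hδ
  · -- every set is Gδ
    intro A
    have hA : A = ⋂ n, (Aᶜ ∩ Dn n)ᶜ := by
      ext x
      simp only [Set.mem_iInter, Set.mem_compl_iff, Set.mem_inter_iff, not_and]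
      constructor
      · intro hx n hc
        exact absurd hx hc
      · intro h
        by_contra hx
        cases x with
        | inl β => exact h (f β) hx (Or.inl ⟨β, rfl, rfl⟩)
        | inr α => exact h 0 hx (Or.inr ⟨α, rfl⟩)
    rw [hA]
    exact IsGδ.iInter fun n => ((hclosed Aᶜ n).isOpen_compl).isGδ
end
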